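/- arXiv:1210.0631 — 5 statements merged into one kernel-verified Lean document; each statement's English description precedes it below -/
import Mathlib

section
/- The vectors Tˣe (x ∈ ℤ) form an orthonormal system in H, i.e. ⟨Tˣe, Tʸe⟩ = 1 if x = y and 0 otherwise. Consequently, the vectors e₁ˣ = Tˣe and e₂ˣ = Tˣεe (x ∈ ℤ) together form an orthonormal system, with e₁ˣ ∈ π₊H and e₂ˣ ∈ π₋H for every x ∈ ℤ. -/
open ContinuousLinearMap

set_option maxHeartbeats 1000000

private lemma qw_aux {H : Type*} [NormedAddCommGroup H] [InnerProductSpace ℂ H]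
    [CompleteSpace H]
    (V A σ : H →L[ℂ] H) (h1 : A * V = 1) (h2 : V * A = 1) (hσσ : σ * σ = 1)
    (hVσ : V * σ = σ * V) (hAσ : A * σ = σ * A) :
    ((1 - σ) * V + (1 + σ) * A) * ((1 + σ) * V + (1 - σ) * A) = (4 : ℂ) • 1 := by
  have key : ((1 - σ) * V + (1 + σ) * A) * ((1 + σ) * V + (1 - σ) * A)
      = (1 - σ) * (V * (1 + σ)) * V + (1 - σ) * (V * (1 - σ)) * A
        + (1 + σ) * (A * (1 + σ)) * V + (1 + σ) * (A * (1 - σ)) * A := by noncomm_ring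
  have hVP : V * (1 + σ) = (1 + σ) * V := by noncomm_ring [hVσ]
  have hVQ : V * (1 - σ) = (1 - σ) * V := by noncomm_ring [hVσ]
  have hAP : A * (1 + σ) = (1 + σ) * A := by noncomm_ring [hAσ]
  have hAQ : A * (1 - σ) = (1 - σ) * A := by noncomm_ring [hAσ]
  rw [key, hVP, hVQ, hAP, hAQ]
  have key2 : (1 - σ) * ((1 + σ) * V) * V + (1 - σ) * ((1 - σ) * V) * A
        + (1 + σ) * ((1 + σ) * A) * V + (1 + σ) * ((1 - σ) * A) * A
      = ((1-σ)*(1+σ)) * (V*V) + ((1-σ)*(1-σ)) * (V*A) + ((1+σ)*(1+σ)) * (A*V)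
        + ((1+σ)*(1-σ)) * (A*A) := by noncomm_ring
  rw [key2, h1, h2]
  have hz : (1 - σ) * (1 + σ) = 0 := by noncomm_ring [hσσ]
  have hz2 : (1 + σ) * (1 - σ) = 0 := by noncomm_ring [hσσ]
  rw [hz, hz2]
  have h3 : ((1:H →L[ℂ] H) - σ) * (1 - σ) * 1 + (1 + σ) * (1 + σ) * 1
      = σ * σ + σ * σ + (1 + 1) := by noncomm_ring
  rw [zero_mul, zero_mul, zero_add, add_zero, h3, hσσ]
  norm_num [Algebra.smul_def, map_ofNat]

/-- Under (QW1)-(QW4) and (QWR), the vectors `Tˣe` (`x ∈ ℤ`) form an orthonormal system;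
consequently the vectors `e₁ˣ = Tˣe ∈ π₊H` and `e₂ˣ = Tˣεe ∈ π₋H` together form an
orthonormal system. -/
theorem qw_orthonormal_system {H : Type*} [NormedAddCommGroup H] [InnerProductSpace ℂ H]
    [CompleteSpace H]
    (V W σ X Y T Pp Pm ε : H →L[ℂ] H)
    (hVu : adjoint V ∘L V = 1 ∧ V ∘L adjoint V = 1)
    (hWu : adjoint W ∘L W = 1 ∧ W ∘L adjoint W = 1)
    (hσu : adjoint σ ∘L σ = 1 ∧ σ ∘L adjoint σ = 1)
    (hQW1 : W ∘L W = -1)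
    (hQW2 : V ∘L W = W ∘L adjoint V)
    (hQW3W : σ ∘L W + W ∘L σ = 0)
    (hQW3V : σ ∘L V - V ∘L σ = 0)
    (hQW4 : adjoint σ = σ)
    (hX : X = (2 : ℂ)⁻¹ • (V + adjoint V))
    (hY : Y = (2 * Complex.I)⁻¹ • (V - adjoint V))
    (hT : T = X + Complex.I • (σ ∘L Y))
    (hPp : Pp = (2 : ℂ)⁻¹ • (1 + σ))
    (hPm : Pm = (2 : ℂ)⁻¹ • (1 - σ))
    (hε : ε = V ∘L W)
    (e : H) (he : ‖e‖ = 1) (hePp : Pp e = e)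
    (horth : ∀ m : ℕ, 0 < m → (inner ℂ ((V ^ m) e) e : ℂ) = 0)
    (Tu : (H →L[ℂ] H)ˣ) (hTu : (Tu : H →L[ℂ] H) = T)
    (e1 e2 : ℤ → H)
    (he1 : ∀ x : ℤ, e1 x = ((Tu ^ x : (H →L[ℂ] H)ˣ) : H →L[ℂ] H) e)
    (he2 : ∀ x : ℤ, e2 x = ((Tu ^ x : (H →L[ℂ] H)ˣ) : H →L[ℂ] H) (ε e)) :
    (∀ x y : ℤ, (inner ℂ (((Tu ^ x : (H →L[ℂ] H)ˣ) : H →L[ℂ] H) e)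
        (((Tu ^ y : (H →L[ℂ] H)ˣ) : H →L[ℂ] H) e) : ℂ) = if x = y then 1 else 0) ∧
    (∀ x : ℤ, Pp (e1 x) = e1 x) ∧
    (∀ x : ℤ, Pm (e2 x) = e2 x) ∧
    (∀ x y : ℤ, (inner ℂ (e1 x) (e1 y) : ℂ) = if x = y then 1 else 0) ∧
    (∀ x y : ℤ, (inner ℂ (e2 x) (e2 y) : ℂ) = if x = y then 1 else 0) ∧
    (∀ x y : ℤ, (inner ℂ (e1 x) (e2 y) : ℂ) = 0) := by
  obtain ⟨hV1, hV2⟩ := hVu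
  obtain ⟨hW1, hW2⟩ := hWu
  obtain ⟨hσ1, hσ2⟩ := hσu
  set A := adjoint V with hAdef
  have hadj_mul : ∀ f g : H →L[ℂ] H, adjoint (f * g) = adjoint g * adjoint f := by
    intro f g
    rw [← star_eq_adjoint, ← star_eq_adjoint, ← star_eq_adjoint, star_mul]
  have h1 : A * V = 1 := hV1
  have h2 : V * A = 1 := hV2
  have hW1' : adjoint W * W = 1 := hW1
  have hQW1' : W * W = -1 := hQW1
  have hQW2' : V * W = W * A := hQW2
  have hε' : ε = V * W := hε
  have hσσ : σ * σ = 1 := by rw [hQW4] at hσ1; exact hσ1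
  have hVσ : V * σ = σ * V := (sub_eq_zero.mp hQW3V).symm
  have hAσ : A * σ = σ * A := by
    have h := congrArg adjoint hVσ
    rw [hadj_mul, hadj_mul, hQW4] at h
    exact h.symm
  have hWadj : adjoint W = -W := by
    have h : adjoint W * (W * W) = adjoint W * (-1) := by rw [hQW1']
    rw [← mul_assoc, hW1'] at h
    simp only [one_mul, mul_neg_one] at h
    have h2' := congrArg (fun x => -x) h
    simp only [neg_neg] at h2'
    exact h2'.symm
  have hεadj : adjoint ε = -(W * A) := by
    rw [hε', hadj_mul, hWadj, neg_mul]
  have hεε : adjoint ε * ε = 1 := by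
    rw [hεadj, hε']
    have h' : -(W * A) * (V * W) = -(W * ((A * V) * W)) := by noncomm_ring
    rw [h', h1, one_mul, hQW1']
    simp
  have hεε' : ε * adjoint ε = 1 := by
    rw [hεadj, hε']
    have h' : (V * W) * -(W * A) = -(V * ((W * W) * A)) := by noncomm_ring
    rw [h', hQW1']
    simpa using h2
  have hσW : σ * W = -(W * σ) := by
    have h' : σ * W + W * σ = 0 := hQW3W
    exact eq_neg_of_add_eq_zero_left h'
  have hσε : σ * ε = -(ε * σ) := by
    rw [hε']
    have hσV' : σ * V = V * σ := sub_eq_zero.mp hQW3V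
    calc σ * (V * W) = V * (σ * W) := by rw [← mul_assoc, hσV', mul_assoc]
      _ = V * -(W * σ) := by rw [hσW]
      _ = -(V * W * σ) := by noncomm_ring
  -- formula for T and its adjoint
  have hTf : T = (2:ℂ)⁻¹ • ((1 + σ) * V + (1 - σ) * A) := by
    rw [hT, hX, hY]
    have hc1 : σ ∘L ((2 * Complex.I)⁻¹ • (V - A)) = (2 * Complex.I)⁻¹ • (σ * (V - A)) :=
      mul_smul_comm _ _ _
    rw [hc1, smul_smul]
    have hc : Complex.I * (2 * Complex.I)⁻¹ = (2:ℂ)⁻¹ := by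
      field_simp
    rw [hc, ← smul_add]
    congr 1
    noncomm_ring
  have hstarV : star V = A := by rw [star_eq_adjoint, ← hAdef]
  have hstarA : star A = V := by rw [hAdef, star_eq_adjoint, adjoint_adjoint]
  have hstarσ : star σ = σ := by rw [star_eq_adjoint, hQW4]
  have hstar2 : star ((2:ℂ)⁻¹) = (2:ℂ)⁻¹ := by norm_num
  have hTadj : adjoint T = (2:ℂ)⁻¹ • ((1 - σ) * V + (1 + σ) * A) := by
    rw [← star_eq_adjoint, hTf]
    simp only [star_smul, star_add, star_sub, star_mul, star_one, hstarV, hstarA, hstarσ, hstar2]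
    congr 1
    noncomm_ring [hAσ, hVσ]
  have hTT1 : adjoint T * T = 1 := by
    rw [hTadj, hTf, smul_mul_assoc, mul_smul_comm, smul_smul,
        qw_aux V A σ h1 h2 hσσ hVσ hAσ, smul_smul,
        show ((2:ℂ)⁻¹ * (2:ℂ)⁻¹ * 4) = 1 from by norm_num, one_smul]
  have hTT2 : T * adjoint T = 1 := by
    rw [hTadj, hTf, smul_mul_assoc, mul_smul_comm, smul_smul,
        show (1+σ)*V + (1-σ)*A = (1-σ)*A + (1+σ)*V from add_comm _ _,
        show (1-σ)*V + (1+σ)*A = (1+σ)*A + (1-σ)*V from add_comm _ _,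
        qw_aux A V σ h2 h1 hσσ hAσ hVσ, smul_smul,
        show ((2:ℂ)⁻¹ * (2:ℂ)⁻¹ * 4) = 1 from by norm_num, one_smul]
  have hTuinv : ((Tu⁻¹ : (H →L[ℂ] H)ˣ) : H →L[ℂ] H) = adjoint T := by
    calc ((Tu⁻¹ : (H →L[ℂ] H)ˣ) : H →L[ℂ] H)
        = ↑Tu⁻¹ * (T * adjoint T) := by rw [hTT2, mul_one]
      _ = (↑Tu⁻¹ * ↑Tu) * adjoint T := by rw [hTu, mul_assoc]
      _ = adjoint T := by rw [Tu.inv_mul, one_mul]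
  have hσT : σ * T = T * σ := by
    rw [hTf, mul_smul_comm, smul_mul_assoc]
    congr 1
    noncomm_ring [hVσ, hAσ]
  have hσTadj : σ * adjoint T = adjoint T * σ := by
    rw [hTadj, mul_smul_comm, smul_mul_assoc]
    congr 1
    noncomm_ring [hVσ, hAσ]
  have hhalf : ∀ w : H, (2:ℂ)⁻¹ • (w + w) = w := by
    intro w
    rw [← two_smul ℂ, smul_smul]
    norm_num
  have hσe : σ e = e := by
    have h := hePp
    rw [hPp] at h
    simp only [ContinuousLinearMap.smul_apply, ContinuousLinearMap.add_apply,
      ContinuousLinearMap.one_apply] at h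
    have h2' : (2:ℂ) • ((2:ℂ)⁻¹ • (e + σ e)) = (2:ℂ) • e := by rw [h]
    rw [smul_smul] at h2'
    norm_num at h2'
    have h3' : σ e = (2:ℂ) • e - e := by rw [← h2']; abel
    rw [h3', two_smul]
    abel
  have hσεe : σ (ε e) = -(ε e) := by
    have h := ContinuousLinearMap.ext_iff.mp hσε e
    simp only [ContinuousLinearMap.mul_apply, ContinuousLinearMap.neg_apply] at h
    rw [hσe] at h
    exact h
  have hσVv : ∀ v : H, σ (V v) = V (σ v) := by
    intro v
    have h := ContinuousLinearMap.ext_iff.mp (sub_eq_zero.mp hQW3V) v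
    simpa using h
  have hσAv : ∀ v : H, σ (A v) = A (σ v) := by
    intro v
    have h := ContinuousLinearMap.ext_iff.mp hAσ v
    simpa [ContinuousLinearMap.mul_apply] using h.symm
  have hTapp : ∀ v : H, T v = (2:ℂ)⁻¹ • ((V v + σ (V v)) + (A v - σ (A v))) := by
    intro v
    rw [ContinuousLinearMap.ext_iff.mp hTf v]
    simp only [ContinuousLinearMap.smul_apply, ContinuousLinearMap.add_apply,
      ContinuousLinearMap.sub_apply, ContinuousLinearMap.mul_apply,
      ContinuousLinearMap.one_apply]
  have hSapp : ∀ v : H, adjoint T v = (2:ℂ)⁻¹ • ((V v - σ (V v)) + (A v + σ (A v))) := by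
    intro v
    rw [ContinuousLinearMap.ext_iff.mp hTadj v]
    simp only [ContinuousLinearMap.smul_apply, ContinuousLinearMap.add_apply,
      ContinuousLinearMap.sub_apply, ContinuousLinearMap.mul_apply,
      ContinuousLinearMap.one_apply]
  have hTv : ∀ v : H, σ v = v → T v = V v := by
    intro v hv
    rw [hTapp v, hσVv v, hσAv v, hv, sub_self, add_zero]
    exact hhalf _
  have hTv' : ∀ v : H, σ v = -v → T v = A v := by
    intro v hv
    rw [hTapp v, hσVv v, hσAv v, hv, map_neg, map_neg, sub_neg_eq_add, add_neg_cancel, zero_add]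
    exact hhalf _
  have hSv : ∀ v : H, σ v = v → adjoint T v = A v := by
    intro v hv
    rw [hSapp v, hσVv v, hσAv v, hv, sub_self, zero_add]
    exact hhalf _
  have hSv' : ∀ v : H, σ v = -v → adjoint T v = V v := by
    intro v hv
    rw [hSapp v, hσVv v, hσAv v, hv, map_neg, map_neg, sub_neg_eq_add, add_neg_cancel, add_zero]
    exact hhalf _
  -- conjugation by ε
  have hconj1 : adjoint ε * V * ε = A := by
    rw [hεadj, hε']
    have h' : -(W * A) * V * (V * W) = -(W * ((A * V) * (V * W))) := by noncomm_ring
    rw [h', h1, one_mul, hQW2']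
    have h'' : -(W * (W * A)) = -((W * W) * A) := by noncomm_ring
    rw [h'', hQW1']
    simp
  have hconjm : ∀ m : ℕ, adjoint ε * V ^ m * ε = A ^ m := by
    intro m
    induction m with
    | zero => rw [pow_zero, mul_one, hεε, pow_zero]
    | succ k ih =>
      have step : adjoint ε * V ^ (k+1) * ε
          = (adjoint ε * V ^ k * ε) * (adjoint ε * V * ε) := by
        calc adjoint ε * V ^ (k+1) * ε
            = adjoint ε * V ^ k * 1 * V * ε := by rw [pow_succ]; noncomm_ring
          _ = adjoint ε * V ^ k * (ε * adjoint ε) * V * ε := by rw [hεε']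
          _ = (adjoint ε * V ^ k * ε) * (adjoint ε * V * ε) := by noncomm_ring
      rw [step, ih, hconj1, ← pow_succ]
  -- powers acting on e
  have hpos : ∀ m : ℕ, ((Tu ^ (m:ℤ) : (H →L[ℂ] H)ˣ) : H →L[ℂ] H) e = (V ^ m) e
      ∧ σ ((V ^ m) e) = (V ^ m) e := by
    intro m
    induction m with
    | zero => exact ⟨by simp, by simpa using hσe⟩
    | succ k ih =>
      obtain ⟨ih1, ih2⟩ := ih
      have hz : (Tu : (H →L[ℂ] H)ˣ) ^ (((k:ℕ)+1:ℕ):ℤ) = Tu * Tu ^ (k:ℤ) := by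
        push_cast
        group
      constructor
      · rw [hz, Units.val_mul, ContinuousLinearMap.mul_apply, ih1, hTu, hTv _ ih2,
          pow_succ', ContinuousLinearMap.mul_apply]
      · rw [pow_succ', ContinuousLinearMap.mul_apply, hσVv, ih2]
  have hneg : ∀ m : ℕ, ((Tu ^ (-(m:ℤ)) : (H →L[ℂ] H)ˣ) : H →L[ℂ] H) e = (A ^ m) e
      ∧ σ ((A ^ m) e) = (A ^ m) e := by
    intro m
    induction m with
    | zero => exact ⟨by simp, by simpa using hσe⟩
    | succ k ih =>
      obtain ⟨ih1, ih2⟩ := ih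
      have hz : (Tu : (H →L[ℂ] H)ˣ) ^ (-(((k:ℕ)+1:ℕ):ℤ)) = Tu⁻¹ * Tu ^ (-(k:ℤ)) := by
        push_cast
        group
      constructor
      · rw [hz, Units.val_mul, ContinuousLinearMap.mul_apply, ih1, hTuinv, hSv _ ih2,
          pow_succ', ContinuousLinearMap.mul_apply]
      · rw [pow_succ', ContinuousLinearMap.mul_apply, hσAv, ih2]
  -- powers acting on ε e
  have hpos2 : ∀ m : ℕ, ((Tu ^ (m:ℤ) : (H →L[ℂ] H)ˣ) : H →L[ℂ] H) (ε e) = (A ^ m) (ε e)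
      ∧ σ ((A ^ m) (ε e)) = -((A ^ m) (ε e)) := by
    intro m
    induction m with
    | zero => exact ⟨by simp, by simpa using hσεe⟩
    | succ k ih =>
      obtain ⟨ih1, ih2⟩ := ih
      have hz : (Tu : (H →L[ℂ] H)ˣ) ^ (((k:ℕ)+1:ℕ):ℤ) = Tu * Tu ^ (k:ℤ) := by
        push_cast
        group
      constructor
      · rw [hz, Units.val_mul, ContinuousLinearMap.mul_apply, ih1, hTu, hTv' _ ih2,
          pow_succ', ContinuousLinearMap.mul_apply]
      · rw [pow_succ', ContinuousLinearMap.mul_apply, hσAv, ih2, map_neg]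
  have hneg2 : ∀ m : ℕ, ((Tu ^ (-(m:ℤ)) : (H →L[ℂ] H)ˣ) : H →L[ℂ] H) (ε e) = (V ^ m) (ε e)
      ∧ σ ((V ^ m) (ε e)) = -((V ^ m) (ε e)) := by
    intro m
    induction m with
    | zero => exact ⟨by simp, by simpa using hσεe⟩
    | succ k ih =>
      obtain ⟨ih1, ih2⟩ := ih
      have hz : (Tu : (H →L[ℂ] H)ˣ) ^ (-(((k:ℕ)+1:ℕ):ℤ)) = Tu⁻¹ * Tu ^ (-(k:ℤ)) := by
        push_cast
        group
      constructor
      · rw [hz, Units.val_mul, ContinuousLinearMap.mul_apply, ih1, hTuinv, hSv' _ ih2,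
          pow_succ', ContinuousLinearMap.mul_apply]
      · rw [pow_succ', ContinuousLinearMap.mul_apply, hσVv, ih2, map_neg]
  -- σ commutes with all integer powers of Tu
  have hσcommz : ∀ n : ℤ, σ * ((Tu ^ n : (H →L[ℂ] H)ˣ) : H →L[ℂ] H)
      = ((Tu ^ n : (H →L[ℂ] H)ˣ) : H →L[ℂ] H) * σ := by
    intro n
    induction n using Int.induction_on with
    | zero => simp
    | succ k ih =>
      rw [show (Tu : (H →L[ℂ] H)ˣ) ^ ((k:ℤ)+1) = Tu ^ (k:ℤ) * Tu from by group,
        Units.val_mul, hTu, ← mul_assoc, ih, mul_assoc, hσT, ← mul_assoc]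
    | pred k ih =>
      rw [show (Tu : (H →L[ℂ] H)ˣ) ^ (-(k:ℤ)-1) = Tu ^ (-(k:ℤ)) * Tu⁻¹ from by group,
        Units.val_mul, hTuinv, ← mul_assoc, ih, mul_assoc, hσTadj, ← mul_assoc]
  -- adjoint of integer powers
  have hadjz : ∀ n : ℤ, adjoint ((Tu ^ n : (H →L[ℂ] H)ˣ) : H →L[ℂ] H)
      = ((Tu ^ (-n) : (H →L[ℂ] H)ˣ) : H →L[ℂ] H) := by
    intro n
    induction n using Int.induction_on with
    | zero => simp [← star_eq_adjoint]
    | succ k ih =>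
      rw [show (Tu : (H →L[ℂ] H)ˣ) ^ ((k:ℤ)+1) = Tu ^ (k:ℤ) * Tu from by group,
        show (Tu : (H →L[ℂ] H)ˣ) ^ (-((k:ℤ)+1)) = Tu⁻¹ * Tu ^ (-(k:ℤ)) from by group,
        Units.val_mul, Units.val_mul, hadj_mul, ih, hTu, ← hTuinv]
    | pred k ih =>
      rw [show (Tu : (H →L[ℂ] H)ˣ) ^ (-(k:ℤ)-1) = Tu ^ (-(k:ℤ)) * Tu⁻¹ from by group,
        show (Tu : (H →L[ℂ] H)ˣ) ^ (-(-(k:ℤ)-1)) = Tu * Tu ^ ((k:ℤ)) from by group,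
        Units.val_mul, Units.val_mul, hadj_mul, hTuinv, adjoint_adjoint, ← hTu]
      rw [show adjoint ((Tu ^ (-(k:ℤ)) : (H →L[ℂ] H)ˣ) : H →L[ℂ] H)
          = ((Tu ^ (k:ℤ) : (H →L[ℂ] H)ˣ) : H →L[ℂ] H) from by
        have := ih; simpa using this]
  -- reduction of inner products
  have hred : ∀ (v : H) (x y : ℤ),
      (inner ℂ (((Tu ^ x : (H →L[ℂ] H)ˣ) : H →L[ℂ] H) v)
        (((Tu ^ y : (H →L[ℂ] H)ˣ) : H →L[ℂ] H) v) : ℂ)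
      = inner ℂ (((Tu ^ (x-y) : (H →L[ℂ] H)ˣ) : H →L[ℂ] H) v) v := by
    intro v x y
    have h := (ContinuousLinearMap.adjoint_inner_left
      ((Tu ^ y : (H →L[ℂ] H)ˣ) : H →L[ℂ] H) v
      (((Tu ^ x : (H →L[ℂ] H)ˣ) : H →L[ℂ] H) v)).symm
    rw [h, hadjz y]
    congr 1
    rw [show (Tu : (H →L[ℂ] H)ˣ) ^ (x-y) = Tu ^ (-y) * Tu ^ x from by group,
      Units.val_mul, ContinuousLinearMap.mul_apply]
  have hee : (inner ℂ e e : ℂ) = 1 := by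
    rw [inner_self_eq_norm_sq_to_K, he]
    norm_num
  have hApow : ∀ m : ℕ, A ^ m = adjoint (V ^ m) := by
    intro m
    rw [hAdef, ← star_eq_adjoint, ← star_eq_adjoint, star_pow]
  have hinner_e : ∀ n : ℤ, (inner ℂ (((Tu ^ n : (H →L[ℂ] H)ˣ) : H →L[ℂ] H) e) e : ℂ)
      = if n = 0 then 1 else 0 := by
    intro n
    obtain ⟨m, rfl | rfl⟩ := Int.eq_nat_or_neg n
    · rw [(hpos m).1]
      rcases Nat.eq_zero_or_pos m with hm | hm
      · subst hm
        rw [if_pos (by norm_num), pow_zero, ContinuousLinearMap.one_apply]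
        exact hee
      · rw [if_neg (by omega)]
        exact horth m hm
    · rw [(hneg m).1]
      rcases Nat.eq_zero_or_pos m with hm | hm
      · subst hm
        rw [if_pos (by norm_num), pow_zero, ContinuousLinearMap.one_apply]
        exact hee
      · rw [if_neg (by omega), hApow m, ContinuousLinearMap.adjoint_inner_left,
          ← inner_conj_symm, horth m hm, map_zero]
  have hεnorm : (inner ℂ (ε e) (ε e) : ℂ) = 1 := by
    have h1' := ContinuousLinearMap.adjoint_inner_left ε e (ε e)
    have h2' : adjoint ε (ε e) = e := by
      have h3' : adjoint ε (ε e) = (adjoint ε * ε) e := by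
        simp [ContinuousLinearMap.mul_apply]
      rw [h3', hεε, ContinuousLinearMap.one_apply]
    rw [← h1', h2']
    exact hee
  have hVmε : ∀ m : ℕ, 0 < m → (inner ℂ ((V ^ m) (ε e)) (ε e) : ℂ) = 0 := by
    intro m hm
    have h1' := (ContinuousLinearMap.adjoint_inner_left ε e ((V ^ m) (ε e))).symm
    have h2' : adjoint ε ((V ^ m) (ε e)) = (A ^ m) e := by
      have h3' : adjoint ε ((V ^ m) (ε e)) = (adjoint ε * V ^ m * ε) e := by
        simp [ContinuousLinearMap.mul_apply]
      rw [h3', hconjm m]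
    rw [h1', h2', hApow m, ContinuousLinearMap.adjoint_inner_left,
      ← inner_conj_symm, horth m hm, map_zero]
  have hinner_ε : ∀ n : ℤ, (inner ℂ (((Tu ^ n : (H →L[ℂ] H)ˣ) : H →L[ℂ] H) (ε e)) (ε e) : ℂ)
      = if n = 0 then 1 else 0 := by
    intro n
    obtain ⟨m, rfl | rfl⟩ := Int.eq_nat_or_neg n
    · rw [(hpos2 m).1]
      rcases Nat.eq_zero_or_pos m with hm | hm
      · subst hm
        rw [if_pos (by norm_num), pow_zero, ContinuousLinearMap.one_apply]
        exact hεnorm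
      · rw [if_neg (by omega), hApow m, ContinuousLinearMap.adjoint_inner_left,
          ← inner_conj_symm, hVmε m hm, map_zero]
    · rw [(hneg2 m).1]
      rcases Nat.eq_zero_or_pos m with hm | hm
      · subst hm
        rw [if_pos (by norm_num), pow_zero, ContinuousLinearMap.one_apply]
        exact hεnorm
      · rw [if_neg (by omega)]
        exact hVmε m hm
  -- eigenvector facts for e1 and e2
  have hσe1 : ∀ x : ℤ, σ (e1 x) = e1 x := by
    intro x
    rw [he1]
    have h := ContinuousLinearMap.ext_iff.mp (hσcommz x) e
    simp only [ContinuousLinearMap.mul_apply] at h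
    rw [h, hσe]
  have hσe2 : ∀ x : ℤ, σ (e2 x) = -(e2 x) := by
    intro x
    rw [he2]
    have h := ContinuousLinearMap.ext_iff.mp (hσcommz x) (ε e)
    simp only [ContinuousLinearMap.mul_apply] at h
    rw [h, hσεe, map_neg]
  refine ⟨?_, ?_, ?_, ?_, ?_, ?_⟩
  · intro x y
    rw [hred e x y, hinner_e (x - y)]
    simp only [sub_eq_zero]
  · intro x
    rw [hPp]
    simp only [ContinuousLinearMap.smul_apply, ContinuousLinearMap.add_apply,
      ContinuousLinearMap.one_apply]
    rw [hσe1 x]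
    exact hhalf _
  · intro x
    rw [hPm]
    simp only [ContinuousLinearMap.smul_apply, ContinuousLinearMap.sub_apply,
      ContinuousLinearMap.one_apply]
    rw [hσe2 x, sub_neg_eq_add]
    exact hhalf _
  · intro x y
    rw [he1, he1, hred e x y, hinner_e (x - y)]
    simp only [sub_eq_zero]
  · intro x y
    rw [he2, he2, hred (ε e) x y, hinner_ε (x - y)]
    simp only [sub_eq_zero]
  · intro x y
    have h := ContinuousLinearMap.adjoint_inner_left σ (e2 y) (e1 x)
    rw [hQW4, hσe1 x, hσe2 y, inner_neg_right] at h
    -- h : inner (e1 x) (e2 y) = -(inner (e1 x) (e2 y))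
    linear_combination h / 2
end

section
/- For every x ∈ ℤ one has V e₁ˣ = e₁^{x+1}, V e₂ˣ = e₂^{x−1}, W e₁ˣ = e₂^{x+1}, and W e₂ˣ = −e₁^{x−1}. In particular, V, W, σ and their inverses preserve the closed subspace of H spanned by the vectors e₁ˣ, e₂ˣ (x ∈ ℤ). -/
open ContinuousLinearMap
set_option maxHeartbeats 1000000


/-- The action of `V` and `W` on the orthonormal vectors `e₁ˣ`, `e₂ˣ`:
`Ve₁ˣ = e₁^{x+1}`, `Ve₂ˣ = e₂^{x−1}`, `We₁ˣ = e₂^{x+1}`, `We₂ˣ = −e₁^{x−1}`.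
In particular `V`, `W`, `σ` and their inverses (= adjoints) preserve the closed
subspace spanned by the `e₁ˣ`, `e₂ˣ`. -/
theorem qw_invariant_subspace {H : Type*} [NormedAddCommGroup H] [InnerProductSpace ℂ H]
    [CompleteSpace H]
    (V W σ X Y T Pp Pm ε : H →L[ℂ] H)
    (hVu : adjoint V ∘L V = 1 ∧ V ∘L adjoint V = 1)
    (hWu : adjoint W ∘L W = 1 ∧ W ∘L adjoint W = 1)
    (hσu : adjoint σ ∘L σ = 1 ∧ σ ∘L adjoint σ = 1)
    (hQW1 : W ∘L W = -1)
    (hQW2 : V ∘L W = W ∘L adjoint V)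
    (hQW3W : σ ∘L W + W ∘L σ = 0)
    (hQW3V : σ ∘L V - V ∘L σ = 0)
    (hQW4 : adjoint σ = σ)
    (hX : X = (2 : ℂ)⁻¹ • (V + adjoint V))
    (hY : Y = (2 * Complex.I)⁻¹ • (V - adjoint V))
    (hT : T = X + Complex.I • (σ ∘L Y))
    (hPp : Pp = (2 : ℂ)⁻¹ • (1 + σ))
    (hPm : Pm = (2 : ℂ)⁻¹ • (1 - σ))
    (hε : ε = V ∘L W)
    (e : H) (he : ‖e‖ = 1) (hePp : Pp e = e)
    (horth : ∀ m : ℕ, 0 < m → (inner ℂ ((V ^ m) e) e : ℂ) = 0)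
    (Tu : (H →L[ℂ] H)ˣ) (hTu : (Tu : H →L[ℂ] H) = T)
    (e1 e2 : ℤ → H)
    (he1 : ∀ x : ℤ, e1 x = ((Tu ^ x : (H →L[ℂ] H)ˣ) : H →L[ℂ] H) e)
    (he2 : ∀ x : ℤ, e2 x = ((Tu ^ x : (H →L[ℂ] H)ˣ) : H →L[ℂ] H) (ε e)) :
    (∀ x : ℤ, V (e1 x) = e1 (x + 1)) ∧
    (∀ x : ℤ, V (e2 x) = e2 (x - 1)) ∧
    (∀ x : ℤ, W (e1 x) = e2 (x + 1)) ∧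
    (∀ x : ℤ, W (e2 x) = -e1 (x - 1)) ∧
    (∀ v ∈ (Submodule.span ℂ (Set.range e1 ∪ Set.range e2)).topologicalClosure,
      V v ∈ (Submodule.span ℂ (Set.range e1 ∪ Set.range e2)).topologicalClosure ∧
      W v ∈ (Submodule.span ℂ (Set.range e1 ∪ Set.range e2)).topologicalClosure ∧
      σ v ∈ (Submodule.span ℂ (Set.range e1 ∪ Set.range e2)).topologicalClosure ∧
      adjoint V v ∈ (Submodule.span ℂ (Set.range e1 ∪ Set.range e2)).topologicalClosure ∧
      adjoint W v ∈ (Submodule.span ℂ (Set.range e1 ∪ Set.range e2)).topologicalClosure ∧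
      adjoint σ v ∈ (Submodule.span ℂ (Set.range e1 ∪ Set.range e2)).topologicalClosure) := by
  obtain ⟨hV1, hV2⟩ := hVu
  obtain ⟨hW1, hW2⟩ := hWu
  -- pointwise basic facts
  have hV'V : ∀ v, adjoint V (V v) = v := fun v => by
    simpa using DFunLike.congr_fun hV1 v
  have hVV' : ∀ v, V (adjoint V v) = v := fun v => by
    simpa using DFunLike.congr_fun hV2 v
  have hWW : ∀ v, W (W v) = -v := fun v => by
    simpa using DFunLike.congr_fun hQW1 v
  have hσVop : σ ∘L V = V ∘L σ := by rwa [sub_eq_zero] at hQW3V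
  have hσV : ∀ v, σ (V v) = V (σ v) := fun v => by
    simpa using DFunLike.congr_fun hσVop v
  have hσV' : ∀ v, σ (adjoint V v) = adjoint V (σ v) := by
    have h2 := congrArg adjoint hσVop
    rw [adjoint_comp, adjoint_comp, hQW4] at h2
    intro v
    simpa using (DFunLike.congr_fun h2 v).symm
  have hσW : ∀ v, σ (W v) = -(W (σ v)) := fun v => by
    have h : σ ∘L W = -(W ∘L σ) := by
      rw [eq_neg_iff_add_eq_zero]; exact hQW3W
    simpa using DFunLike.congr_fun h v
  have hWσ : ∀ v, W (σ v) = -(σ (W v)) := fun v => by rw [hσW v, neg_neg]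
  have hVW : ∀ v, V (W v) = W (adjoint V v) := fun v => by
    simpa using DFunLike.congr_fun hQW2 v
  have hWV : ∀ v, W (V v) = adjoint V (W v) := fun v => by
    have h1 : V (W (V v)) = W v := by rw [hVW (V v), hV'V]
    calc W (V v) = adjoint V (V (W (V v))) := (hV'V _).symm
      _ = adjoint V (W v) := by rw [h1]
  have hWV' : ∀ v, W (adjoint V v) = V (W v) := fun v => (hVW v).symm
  have hσe : σ e = e := by
    have h := hePp
    rw [hPp] at h
    simp only [smul_apply, add_apply, ContinuousLinearMap.one_apply] at h
    have h3 : (2 : ℂ) • ((2 : ℂ)⁻¹ • (e + σ e)) = (2 : ℂ) • e := by rw [h]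
    rw [smul_smul] at h3
    norm_num at h3
    have h4 : e + σ e = e + e := by rw [h3, two_smul]
    exact add_left_cancel h4
  have hσf : σ (ε e) = -(ε e) := by
    rw [hε, comp_apply, hσV, hσW, hσe, map_neg]
  have hT' : ∀ v, T v = (2 : ℂ)⁻¹ • (V v + adjoint V v + (σ (V v) - σ (adjoint V v))) := by
    intro v
    rw [hT, hX, hY]
    simp only [add_apply, smul_apply, comp_apply, sub_apply, map_sub, map_smul, smul_smul]
    have hc : Complex.I * (2 * Complex.I)⁻¹ = (2 : ℂ)⁻¹ := by
      rw [mul_inv]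
      field_simp
    rw [hc]
    module
  -- key vector identities
  have hTe : T e = V e := by
    rw [hT' e]
    simp only [hσV, hσV', hσe]
    module
  have hTV'e : T (adjoint V e) = e := by
    rw [hT' (adjoint V e)]
    simp only [hσV, hσV', hVV', hσe]
    module
  have hTf : T (ε e) = W e := by
    have hV'f : adjoint V (V (ε e)) = ε e := hV'V _
    have hV'f2 : adjoint V (ε e) = W e := by rw [hε, comp_apply, hV'V]
    rw [hT' (ε e)]
    simp only [hσV, hσV', hσf, hV'f2, hσW, hσe, map_neg]
    module
  have hTVf : T (V (ε e)) = ε e := by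
    rw [hT' (V (ε e))]
    simp only [hV'V, hVV', hσV, hσV', hσf, map_neg]
    module
  -- commutation with T
  have hcV : V ∘L T = T ∘L V := by
    ext v
    simp only [comp_apply]
    rw [hT' v, hT' (V v)]
    simp only [map_smul, map_add, map_sub, hV'V, hVV', hσV, hσV']
  have hcW : W ∘L T = T ∘L W := by
    ext v
    simp only [comp_apply]
    rw [hT' v, hT' (W v)]
    simp only [map_smul, map_add, map_sub, map_neg, hWV, hWV', hWσ]
    module
  have hcσ : σ ∘L T = T ∘L σ := by
    ext v
    simp only [comp_apply]
    rw [hT' v, hT' (σ v)]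
    simp only [map_smul, map_add, map_sub, hσV, hσV']
  have hcV' : adjoint V ∘L T = T ∘L adjoint V := by
    ext v
    simp only [comp_apply]
    rw [hT' v, hT' (adjoint V v)]
    simp only [map_smul, map_add, map_sub, hV'V, hVV', hσV, hσV']
  -- adjoint W = -W
  have hW' : ∀ v, adjoint W v = -(W v) := fun v => by
    have h1 : adjoint W (W (W v)) = W v := by
      simpa using DFunLike.congr_fun hW1 (W v)
    rw [hWW] at h1
    rw [map_neg] at h1
    rw [← h1, neg_neg]
  -- commutation through integer powers of Tu
  have key : ∀ (A : H →L[ℂ] H), A ∘L T = T ∘L A → ∀ (x : ℤ) (v : H),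
      A (((Tu ^ x : (H →L[ℂ] H)ˣ) : H →L[ℂ] H) v)
        = ((Tu ^ x : (H →L[ℂ] H)ˣ) : H →L[ℂ] H) (A v) := by
    intro A hA x v
    have hc : Commute A (Tu : H →L[ℂ] H) := by
      show A * (Tu : H →L[ℂ] H) = (Tu : H →L[ℂ] H) * A
      rw [hTu]; exact hA
    have h2 := (hc.units_zpow_right x).eq
    have h3 := DFunLike.congr_fun h2 v
    simpa [mul_apply] using h3
  have hstep : ∀ (x : ℤ) (v : H),
      ((Tu ^ (x + 1) : (H →L[ℂ] H)ˣ) : H →L[ℂ] H) v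
        = ((Tu ^ x : (H →L[ℂ] H)ˣ) : H →L[ℂ] H) (T v) := by
    intro x v
    rw [zpow_add_one, Units.val_mul, ContinuousLinearMap.mul_apply, hTu]
  have hinv : ∀ v w, T w = v → ((Tu⁻¹ : (H →L[ℂ] H)ˣ) : H →L[ℂ] H) v = w := by
    intro v w h
    rw [← h, ← hTu, ← ContinuousLinearMap.mul_apply, ← Units.val_mul, inv_mul_cancel, Units.val_one, ContinuousLinearMap.one_apply]
  have hstep' : ∀ (x : ℤ) (v w : H), T w = v →
      ((Tu ^ (x - 1) : (H →L[ℂ] H)ˣ) : H →L[ℂ] H) v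
        = ((Tu ^ x : (H →L[ℂ] H)ˣ) : H →L[ℂ] H) w := by
    intro x v w h
    rw [zpow_sub_one, Units.val_mul, ContinuousLinearMap.mul_apply, hinv v w h]
  -- the four formulas
  have claim1 : ∀ x : ℤ, V (e1 x) = e1 (x + 1) := by
    intro x
    rw [he1, he1, key V hcV, hstep, hTe]
  have claim2 : ∀ x : ℤ, V (e2 x) = e2 (x - 1) := by
    intro x
    rw [he2, he2, key V hcV, hstep' x (ε e) (V (ε e)) hTVf]
  have claim3 : ∀ x : ℤ, W (e1 x) = e2 (x + 1) := by
    intro x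
    rw [he1, he2, key W hcW, hstep, hTf]
  have claim4 : ∀ x : ℤ, W (e2 x) = -e1 (x - 1) := by
    intro x
    have hWf : W (ε e) = -(adjoint V e) := by
      rw [hε, comp_apply, hWV, hWW, map_neg]
    rw [he2, he1, key W hcW, hWf, map_neg, hstep' x e (adjoint V e) hTV'e]
  -- further formulas for σ and adjoints
  have claimσ1 : ∀ x : ℤ, σ (e1 x) = e1 x := by
    intro x; rw [he1, key σ hcσ, hσe]
  have claimσ2 : ∀ x : ℤ, σ (e2 x) = -e2 x := by
    intro x; rw [he2, key σ hcσ, hσf, map_neg]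
  have claimV'1 : ∀ x : ℤ, adjoint V (e1 x) = e1 (x - 1) := by
    intro x
    rw [he1, he1, key (adjoint V) hcV' x e]
    exact (hstep' x e (adjoint V e) hTV'e).symm
  have claimV'2 : ∀ x : ℤ, adjoint V (e2 x) = e2 (x + 1) := by
    intro x
    have hV'f2 : adjoint V (ε e) = W e := by rw [hε, comp_apply, hV'V]
    rw [he2, he2, key (adjoint V) hcV' x (ε e), hV'f2, hstep, hTf]
  -- invariance of the closed span
  set p := Submodule.span ℂ (Set.range e1 ∪ Set.range e2) with hp
  have hmem1 : ∀ x : ℤ, e1 x ∈ p := fun x =>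
    Submodule.subset_span (Or.inl ⟨x, rfl⟩)
  have hmem2 : ∀ x : ℤ, e2 x ∈ p := fun x =>
    Submodule.subset_span (Or.inr ⟨x, rfl⟩)
  have hpres : ∀ (A : H →L[ℂ] H), (∀ x : ℤ, A (e1 x) ∈ p) → (∀ x : ℤ, A (e2 x) ∈ p) →
      ∀ v ∈ p.topologicalClosure, A v ∈ p.topologicalClosure := by
    intro A h1 h2 v hv
    have hmap : ∀ w ∈ p, A w ∈ p := by
      intro w hw
      induction hw using Submodule.span_induction with
      | mem w hw =>
        rcases hw with ⟨x, rfl⟩ | ⟨x, rfl⟩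
        · exact h1 x
        · exact h2 x
      | zero => simpa using p.zero_mem
      | add a b _ _ ha hb => rw [map_add]; exact p.add_mem ha hb
      | smul c a _ ha => rw [map_smul]; exact p.smul_mem c ha
    have hv' : v ∈ closure (p : Set H) := hv
    show A v ∈ closure (p : Set H)
    exact map_mem_closure A.continuous hv' hmap
  have presV := hpres V (fun x => by rw [claim1]; exact hmem1 _)
    (fun x => by rw [claim2]; exact hmem2 _)
  have presW := hpres W (fun x => by rw [claim3]; exact hmem2 _)
    (fun x => by rw [claim4]; exact p.neg_mem (hmem1 _))
  have presσ := hpres σ (fun x => by rw [claimσ1]; exact hmem1 _)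
    (fun x => by rw [claimσ2]; exact p.neg_mem (hmem2 _))
  have presV' := hpres (adjoint V) (fun x => by rw [claimV'1]; exact hmem1 _)
    (fun x => by rw [claimV'2]; exact hmem2 _)
  have presW' := hpres (adjoint W) (fun x => by rw [hW', claim3]; exact p.neg_mem (hmem2 _))
    (fun x => by rw [hW', claim4, neg_neg]; exact hmem1 _)
  have presσ' : ∀ v ∈ p.topologicalClosure, adjoint σ v ∈ p.topologicalClosure := by
    rw [hQW4]; exact presσ
  exact ⟨claim1, claim2, claim3, claim4, fun v hv =>
    ⟨presV v hv, presW v hv, presσ v hv, presV' v hv, presW' v hv, presσ' v hv⟩⟩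
end

section
/- For every integer n ≥ 0 and every x ∈ ℤ, ⟨UⁿΨ, e₁ˣ⟩ = ψ₁ c_x(p_n¹) + ψ₂ c_x(q_n¹) and ⟨UⁿΨ, e₂ˣ⟩ = ψ₁ c_x(p_n²) + ψ₂ c_x(q_n²). -/
/-- The Laurent polynomial `s(z + z⁻¹)/2`. -/
noncomputable def zArg (s : ℝ) : LaurentPolynomial ℂ :=
  ((s : ℂ) / 2) • (LaurentPolynomial.T 1 + LaurentPolynomial.T (-1))

/-- The Laurent polynomial `Tₙ(s(z + z⁻¹)/2)` (Chebyshev polynomial of the first kind). -/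
noncomputable def chebTz (s : ℝ) (n : ℤ) : LaurentPolynomial ℂ :=
  Polynomial.aeval (zArg s) (Polynomial.Chebyshev.T ℂ n)

/-- The Laurent polynomial `Uₙ(s(z + z⁻¹)/2)` (Chebyshev polynomial of the second kind). -/
noncomputable def chebUz (s : ℝ) (n : ℤ) : LaurentPolynomial ℂ :=
  Polynomial.aeval (zArg s) (Polynomial.Chebyshev.U ℂ n)

/-- `p_n¹(z) = Tₙ(s(z+z⁻¹)/2) + (s/2)(z−z⁻¹) U_{n−1}(s(z+z⁻¹)/2)`. -/
noncomputable def pn1 (s : ℝ) (n : ℕ) : LaurentPolynomial ℂ :=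
  chebTz s (n : ℤ) +
    ((s : ℂ) / 2) • ((LaurentPolynomial.T 1 - LaurentPolynomial.T (-1)) * chebUz s ((n : ℤ) - 1))

/-- `p_n²(z) = t z U_{n−1}(s(z+z⁻¹)/2)`. -/
noncomputable def pn2 (s t : ℝ) (n : ℕ) : LaurentPolynomial ℂ :=
  (t : ℂ) • (LaurentPolynomial.T 1 * chebUz s ((n : ℤ) - 1))

/-- `q_n¹(z) = −t z⁻¹ U_{n−1}(s(z+z⁻¹)/2)`. -/
noncomputable def qn1 (s t : ℝ) (n : ℕ) : LaurentPolynomial ℂ :=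
  -((t : ℂ) • (LaurentPolynomial.T (-1) * chebUz s ((n : ℤ) - 1)))

/-- `q_n²(z) = Tₙ(s(z+z⁻¹)/2) − (s/2)(z−z⁻¹) U_{n−1}(s(z+z⁻¹)/2)`. -/
noncomputable def qn2 (s : ℝ) (n : ℕ) : LaurentPolynomial ℂ :=
  chebTz s (n : ℤ) -
    ((s : ℂ) / 2) • ((LaurentPolynomial.T 1 - LaurentPolynomial.T (-1)) * chebUz s ((n : ℤ) - 1))

namespace QWAux

open LaurentPolynomial

lemma csmul (c : ℂ) (p : LaurentPolynomial ℂ) : c • p = C c * p := by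
  rw [Algebra.smul_def, C_eq_algebraMap]

lemma hA' (s : ℝ) (n : ℤ) :
    chebTz s (n + 1) = zArg s * chebTz s n - (1 - zArg s ^ 2) * chebUz s (n - 1) := by
  have := Polynomial.Chebyshev.T_eq_X_mul_T_sub_pol_U ℂ (n - 1)
  have h2 : n - 1 + 2 = n + 1 := by ring
  have h3 : n - 1 + 1 = n := by ring
  rw [h2, h3] at this
  unfold chebTz chebUz
  rw [this]
  simp [mul_comm]

lemma hB' (s : ℝ) (n : ℤ) :
    chebUz s n = zArg s * chebUz s (n - 1) + chebTz s n := by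
  have := Polynomial.Chebyshev.U_eq_X_mul_U_add_T ℂ (n - 1)
  have h3 : n - 1 + 1 = n := by ring
  rw [h3] at this
  unfold chebTz chebUz
  rw [this]
  simp

variable (s t : ℝ) (n : ℕ)

lemma hab' (hst : s ^ 2 + t ^ 2 = 1) :
    (C (s:ℂ) : LaurentPolynomial ℂ) ^ 2 + (C (t:ℂ)) ^ 2 = 1 := by
  rw [← map_pow, ← map_pow, ← map_add]
  have h : ((s:ℂ)) ^ 2 + ((t:ℂ)) ^ 2 = 1 := by exact_mod_cast hst
  rw [h, map_one]

lemma h2d' : (C (s:ℂ) : LaurentPolynomial ℂ) = 2 * C ((s:ℂ)/2) := by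
  have h : (s:ℂ) = 2 * ((s:ℂ)/2) := by ring
  conv_lhs => rw [h]
  rw [map_mul, map_ofNat]

lemma hzw' : (T 1 : LaurentPolynomial ℂ) * T (-1) = 1 := by
  rw [← T_add]; norm_num

lemma R1 (hst : s ^ 2 + t ^ 2 = 1) :
    pn1 s (n + 1) = (s : ℂ) • (T 1 * pn1 s n) - (t : ℂ) • (T (-1) * pn2 s t n) := by
  have hcast1 : ((n + 1 : ℕ) : ℤ) = (n : ℤ) + 1 := by push_cast; ring
  unfold pn1 pn2
  rw [hcast1, add_sub_cancel_right, hA' s n, hB' s n]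
  have hzw := hzw' ; have hab := hab' s t hst ; have h2d := h2d' s
  simp only [zArg, csmul]
  rw [h2d] at hab ⊢
  set z : LaurentPolynomial ℂ := T 1
  set w : LaurentPolynomial ℂ := T (-1)
  set A := chebTz s (n : ℤ)
  set B := chebUz s ((n : ℤ) - 1)
  set b := C (t:ℂ)
  set d := C ((s:ℂ)/2)
  linear_combination (B*z*w) * hab + B * hzw

lemma R2 (hst : s ^ 2 + t ^ 2 = 1) :
    pn2 s t (n + 1) = (t : ℂ) • (T 1 * pn1 s n) + (s : ℂ) • (T (-1) * pn2 s t n) := by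
  have hcast1 : ((n + 1 : ℕ) : ℤ) = (n : ℤ) + 1 := by push_cast; ring
  unfold pn1 pn2
  rw [hcast1, add_sub_cancel_right, hB' s n]
  have hzw := hzw' ; have hab := hab' s t hst ; have h2d := h2d' s
  simp only [zArg, csmul]
  rw [h2d] at hab ⊢
  set z : LaurentPolynomial ℂ := T 1
  set w : LaurentPolynomial ℂ := T (-1)
  set A := chebTz s (n : ℤ)
  set B := chebUz s ((n : ℤ) - 1)
  set b := C (t:ℂ)
  set d := C ((s:ℂ)/2)
  ring

lemma R3 (hst : s ^ 2 + t ^ 2 = 1) :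
    qn1 s t (n + 1) = (s : ℂ) • (T 1 * qn1 s t n) - (t : ℂ) • (T (-1) * qn2 s n) := by
  have hcast1 : ((n + 1 : ℕ) : ℤ) = (n : ℤ) + 1 := by push_cast; ring
  unfold qn1 qn2
  rw [hcast1, add_sub_cancel_right, hB' s n]
  have hzw := hzw' ; have hab := hab' s t hst ; have h2d := h2d' s
  simp only [zArg, csmul]
  rw [h2d] at hab ⊢
  set z : LaurentPolynomial ℂ := T 1
  set w : LaurentPolynomial ℂ := T (-1)
  set A := chebTz s (n : ℤ)
  set B := chebUz s ((n : ℤ) - 1)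
  set b := C (t:ℂ)
  set d := C ((s:ℂ)/2)
  ring

lemma R4 (hst : s ^ 2 + t ^ 2 = 1) :
    qn2 s (n + 1) = (t : ℂ) • (T 1 * qn1 s t n) + (s : ℂ) • (T (-1) * qn2 s n) := by
  have hcast1 : ((n + 1 : ℕ) : ℤ) = (n : ℤ) + 1 := by push_cast; ring
  unfold qn1 qn2
  rw [hcast1, add_sub_cancel_right, hA' s n, hB' s n]
  have hzw := hzw' ; have hab := hab' s t hst ; have h2d := h2d' s
  simp only [zArg, csmul]
  rw [h2d] at hab ⊢
  set z : LaurentPolynomial ℂ := T 1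
  set w : LaurentPolynomial ℂ := T (-1)
  set A := chebTz s (n : ℤ)
  set B := chebUz s ((n : ℤ) - 1)
  set b := C (t:ℂ)
  set d := C ((s:ℂ)/2)
  linear_combination (B*z*w) * hab + B * hzw

lemma base1 : pn1 s 0 = 1 := by
  unfold pn1 chebTz chebUz
  norm_num [Polynomial.Chebyshev.U_neg_one, Polynomial.Chebyshev.T_zero]
lemma base2 : pn2 s t 0 = 0 := by
  unfold pn2 chebUz
  norm_num [Polynomial.Chebyshev.U_neg_one]
lemma base3 : qn1 s t 0 = 0 := by
  unfold qn1 chebUz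
  norm_num [Polynomial.Chebyshev.U_neg_one]
lemma base4 : qn2 s 0 = 1 := by
  unfold qn2 chebTz chebUz
  norm_num [Polynomial.Chebyshev.U_neg_one, Polynomial.Chebyshev.T_zero]

section LC

variable {H : Type*} [NormedAddCommGroup H] [InnerProductSpace ℂ H]

/-- linear combination of the family `f` with coefficients given by a Laurent polynomial -/
noncomputable def LC (f : ℤ → H) (p : LaurentPolynomial ℂ) : H :=
  Finsupp.sum p.coeff fun x c => c • f x

lemma LC_add (f : ℤ → H) (p q : LaurentPolynomial ℂ) : LC f (p + q) = LC f p + LC f q := by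
  unfold LC
  rw [AddMonoidAlgebra.coeff_add]
  exact Finsupp.sum_add_index' (by simp) (fun a b c => add_smul b c (f a))

lemma LC_smul (f : ℤ → H) (c : ℂ) (p : LaurentPolynomial ℂ) : LC f (c • p) = c • LC f p := by
  unfold LC
  rw [AddMonoidAlgebra.coeff_smul, Finsupp.sum_smul_index (fun i => by simp), Finsupp.smul_sum]
  simp [smul_smul]

lemma LC_sub (f : ℤ → H) (p q : LaurentPolynomial ℂ) : LC f (p - q) = LC f p - LC f q := by
  have h : p - q = p + (-1 : ℂ) • q := by
    rw [neg_one_smul]; abel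
  rw [h, LC_add, LC_smul]
  simp [sub_eq_add_neg]

lemma LC_single (f : ℤ → H) (c : ℂ) (x : ℤ) : LC f (LaurentPolynomial.C c * T x) = c • f x := by
  rw [← single_eq_C_mul_T]
  unfold LC
  rw [AddMonoidAlgebra.coeff_single]
  exact Finsupp.sum_single_index (by simp)

lemma LC_one (f : ℤ → H) : LC f 1 = f 0 := by
  have h : (1 : LaurentPolynomial ℂ) = LaurentPolynomial.C 1 * T 0 := by simp
  rw [h, LC_single, one_smul]

lemma LC_congr (f g : ℤ → H) (p : LaurentPolynomial ℂ) (h : ∀ x, f x = g x) :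
    LC f p = LC g p := by
  unfold LC
  exact Finsupp.sum_congr fun x _ => by rw [h x]

lemma LC_fun_add (f g : ℤ → H) (p : LaurentPolynomial ℂ) :
    LC (fun x => f x + g x) p = LC f p + LC g p := by
  unfold LC
  rw [← Finsupp.sum_add]
  exact Finsupp.sum_congr fun x _ => smul_add _ _ _

lemma LC_fun_smul (f : ℤ → H) (c : ℂ) (p : LaurentPolynomial ℂ) :
    LC (fun x => c • f x) p = c • LC f p := by
  unfold LC
  rw [Finsupp.smul_sum]
  exact Finsupp.sum_congr fun x _ => smul_comm _ _ _

lemma LC_fun_neg (f : ℤ → H) (p : LaurentPolynomial ℂ) :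
    LC (fun x => -f x) p = -LC f p := by
  have h : ∀ x : ℤ, -f x = (-1 : ℂ) • f x := fun x => by simp
  rw [LC_congr _ _ p h, LC_fun_smul]
  simp

lemma LC_shift (f : ℤ → H) (a : ℤ) (p : LaurentPolynomial ℂ) :
    LC (fun x => f (x + a)) p = LC f (T a * p) := by
  induction p using LaurentPolynomial.induction_on' with
  | add p q hp hq => rw [mul_add, LC_add, LC_add, hp, hq]
  | C_mul_T n c =>
      rw [LC_single]
      have h : (T a : LaurentPolynomial ℂ) * (LaurentPolynomial.C c * T n)
          = LaurentPolynomial.C c * T (n + a) := by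
        rw [T_add]
        ring
      rw [h, LC_single]

lemma LC_map (A : H →L[ℂ] H) (f : ℤ → H) (p : LaurentPolynomial ℂ) :
    A (LC f p) = LC (fun x => A (f x)) p := by
  unfold LC
  rw [map_finsuppSum]
  exact Finsupp.sum_congr fun x _ => A.map_smul _ _

lemma inner_LC_delta (u : H) (f : ℤ → H) (p : LaurentPolynomial ℂ) (x : ℤ)
    (hf : ∀ y, (inner ℂ u (f y) : ℂ) = if y = x then 1 else 0) :
    (inner ℂ u (LC f p) : ℂ) = p.coeff x := by
  unfold LC
  rw [Finsupp.sum, inner_sum]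
  have h : ∀ y ∈ p.coeff.support, (inner ℂ u (p.coeff y • f y) : ℂ) = if y = x then p.coeff y else 0 := by
    intro y _
    rw [inner_smul_right, hf y]
    split_ifs <;> simp
  rw [Finset.sum_congr rfl h, Finset.sum_ite_eq' p.coeff.support x (fun y => p.coeff y)]
  split_ifs with hx
  · rfl
  · exact (Finsupp.notMem_support_iff.mp hx).symm

lemma inner_LC_zero (u : H) (f : ℤ → H) (p : LaurentPolynomial ℂ)
    (hf : ∀ y, (inner ℂ u (f y) : ℂ) = 0) :
    (inner ℂ u (LC f p) : ℂ) = 0 := by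
  unfold LC
  rw [Finsupp.sum, inner_sum]
  refine Finset.sum_eq_zero fun y _ => ?_
  rw [inner_smul_right, hf y, mul_zero]

end LC

end QWAux

open ContinuousLinearMap

set_option maxHeartbeats 3000000 in
/-- The coefficients of `UⁿΨ` along the orthonormal basis `e₁ˣ`, `e₂ˣ` are given by the
Laurent polynomials `p_nⁱ`, `q_nⁱ`:
`⟨UⁿΨ, e₁ˣ⟩ = ψ₁ c_x(p_n¹) + ψ₂ c_x(q_n¹)` and `⟨UⁿΨ, e₂ˣ⟩ = ψ₁ c_x(p_n²) + ψ₂ c_x(q_n²)`.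
(Here the paper's inner product `⟨u, v⟩`, linear in the first variable, is Mathlib's `inner v u`.) -/
theorem qw_coefficients
    {H : Type*} [NormedAddCommGroup H] [InnerProductSpace ℂ H] [CompleteSpace H]
    (V W σ X Y T Pp Pm ε : H →L[ℂ] H)
    (hVu : adjoint V ∘L V = 1 ∧ V ∘L adjoint V = 1)
    (hWu : adjoint W ∘L W = 1 ∧ W ∘L adjoint W = 1)
    (hσu : adjoint σ ∘L σ = 1 ∧ σ ∘L adjoint σ = 1)
    (hQW1 : W ∘L W = -1)
    (hQW2 : V ∘L W = W ∘L adjoint V)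
    (hQW3W : σ ∘L W + W ∘L σ = 0)
    (hQW3V : σ ∘L V - V ∘L σ = 0)
    (hQW4 : adjoint σ = σ)
    (hX : X = (2 : ℂ)⁻¹ • (V + adjoint V))
    (hY : Y = (2 * Complex.I)⁻¹ • (V - adjoint V))
    (hT : T = X + Complex.I • (σ ∘L Y))
    (hPp : Pp = (2 : ℂ)⁻¹ • (1 + σ))
    (hPm : Pm = (2 : ℂ)⁻¹ • (1 - σ))
    (hε : ε = V ∘L W)
    (e : H) (he : ‖e‖ = 1) (hePp : Pp e = e)
    (horth : ∀ m : ℕ, 0 < m → (inner ℂ ((V ^ m) e) e : ℂ) = 0)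
    (Tu : (H →L[ℂ] H)ˣ) (hTu : (Tu : H →L[ℂ] H) = T)
    (e1 e2 : ℤ → H)
    (he1 : ∀ x : ℤ, e1 x = ((Tu ^ x : (H →L[ℂ] H)ˣ) : H →L[ℂ] H) e)
    (he2 : ∀ x : ℤ, e2 x = ((Tu ^ x : (H →L[ℂ] H)ˣ) : H →L[ℂ] H) (ε e))
    (s t : ℝ) (hs0 : 0 < s) (hs1 : s < 1) (ht0 : 0 < t) (ht1 : t < 1)
    (hst : s ^ 2 + t ^ 2 = 1)
    (U : H →L[ℂ] H) (hU : U = (s : ℂ) • V + (t : ℂ) • W)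
    (ψ₁ ψ₂ : ℂ) (hψ : ‖ψ₁‖ ^ 2 + ‖ψ₂‖ ^ 2 = 1)
    (Ψ : H) (hΨ : Ψ = ψ₁ • e1 0 + ψ₂ • e2 0)
    :
    ∀ (n : ℕ) (x : ℤ),
      (inner ℂ (e1 x) ((U ^ n) Ψ) : ℂ) = ψ₁ * (pn1 s n).coeff x + ψ₂ * (qn1 s t n).coeff x ∧
      (inner ℂ (e2 x) ((U ^ n) Ψ) : ℂ) = ψ₁ * (pn2 s t n).coeff x + ψ₂ * (qn2 s n).coeff x := by
  classical
  open QWAux LaurentPolynomial in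
  -- converting `∘L` statements into `*` statements (definitional)
  have hAV : adjoint V * V = 1 := hVu.1
  have hVA : V * adjoint V = 1 := hVu.2
  have hAWW : adjoint W * W = 1 := hWu.1
  have hVW : V * W = W * adjoint V := hQW2
  have hWW : W * W = -1 := hQW1
  have hσW : σ * W = -(W * σ) := eq_neg_of_add_eq_zero_left hQW3W
  have hσV : σ * V = V * σ := sub_eq_zero.mp hQW3V
  have hVσ : V * σ = σ * V := hσV.symm
  have hσσ : σ * σ = 1 := by
    have h : adjoint σ * σ = 1 := hσu.1
    rwa [hQW4] at h
  have hσA : σ * adjoint V = adjoint V * σ := by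
    have h := congrArg (fun F => star F) hσV
    simp only [star_mul, star_eq_adjoint, hQW4] at h
    exact h.symm
  have hAW : adjoint V * W = W * V := by
    have h1 := congrArg (fun F => adjoint V * F * V) hVW
    simp only [← mul_assoc] at h1
    rw [hAV, one_mul] at h1
    rw [mul_assoc (adjoint V * W), hAV, mul_one] at h1
    exact h1.symm
  -- expanded form of T
  have hIhalf : Complex.I * (2 * Complex.I)⁻¹ = 2⁻¹ := by
    field_simp
  have hmulσ : σ ∘L (V - adjoint V) = σ * V - σ * adjoint V := mul_sub σ V (adjoint V)
  have hTe' : T = (2⁻¹ : ℂ) • (V + adjoint V + (σ * V - σ * adjoint V)) := by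
    rw [hT, hX, hY, ContinuousLinearMap.comp_smul, smul_smul, hIhalf, hmulσ, ← smul_add]
  -- commutation of V, W, σ with T
  have hVT : V * T = T * V := by
    rw [hTe', mul_smul_comm, smul_mul_assoc]
    congr 1
    simp only [mul_add, add_mul, mul_sub, sub_mul]
    have h1 : V * (σ * V) = σ * V * V := by rw [← mul_assoc, hVσ]
    have h2a : V * (σ * adjoint V) = σ := by rw [← mul_assoc, hVσ, mul_assoc, hVA, mul_one]
    have h2b : σ * adjoint V * V = σ := by rw [mul_assoc, hAV, mul_one]
    rw [h1, h2a, h2b, hVA, hAV]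
  have hWT : W * T = T * W := by
    rw [hTe', mul_smul_comm, smul_mul_assoc]
    congr 1
    simp only [mul_add, add_mul, mul_sub, sub_mul]
    have r1 : σ * V * W = -(W * (σ * adjoint V)) := by
      rw [mul_assoc, hVW, ← mul_assoc, hσW, neg_mul, mul_assoc]
    have r2 : σ * adjoint V * W = -(W * (σ * V)) := by
      rw [mul_assoc, hAW, ← mul_assoc, hσW, neg_mul, mul_assoc]
    rw [hVW, hAW, r1, r2]
    abel
  have hσT : σ * T = T * σ := by
    rw [hTe', mul_smul_comm, smul_mul_assoc]
    congr 1
    simp only [mul_add, add_mul, mul_sub, sub_mul]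
    have s1 : σ * (σ * V) = V := by rw [← mul_assoc, hσσ, one_mul]
    have s2 : σ * (σ * adjoint V) = adjoint V := by rw [← mul_assoc, hσσ, one_mul]
    have s3 : σ * V * σ = V := by rw [hσV, mul_assoc, hσσ, mul_one]
    have s4 : σ * adjoint V * σ = adjoint V := by rw [hσA, mul_assoc, hσσ, mul_one]
    rw [s1, s2, s3, s4, hσV, hσA]
  -- commutation with all integer powers of Tu
  have commA : ∀ (B : H →L[ℂ] H), B * T = T * B → ∀ x : ℤ,
      B * ((Tu ^ x : (H →L[ℂ] H)ˣ) : H →L[ℂ] H)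
        = ((Tu ^ x : (H →L[ℂ] H)ˣ) : H →L[ℂ] H) * B := by
    intro B hBT
    have hBTu : B * (Tu : H →L[ℂ] H) = (Tu : H →L[ℂ] H) * B := by rw [hTu]; exact hBT
    have hBinv : B * ((Tu⁻¹ : (H →L[ℂ] H)ˣ) : H →L[ℂ] H)
        = ((Tu⁻¹ : (H →L[ℂ] H)ˣ) : H →L[ℂ] H) * B := by
      calc B * ((Tu⁻¹ : (H →L[ℂ] H)ˣ) : H →L[ℂ] H)
          = ((((Tu⁻¹ : (H →L[ℂ] H)ˣ) : H →L[ℂ] H) * (Tu : H →L[ℂ] H))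
            * (B * ((Tu⁻¹ : (H →L[ℂ] H)ˣ) : H →L[ℂ] H))) := by
            rw [Units.inv_mul, one_mul]
        _ = ((Tu⁻¹ : (H →L[ℂ] H)ˣ) : H →L[ℂ] H) * ((Tu : H →L[ℂ] H) * B)
            * ((Tu⁻¹ : (H →L[ℂ] H)ˣ) : H →L[ℂ] H) := by
            simp only [mul_assoc]
        _ = ((Tu⁻¹ : (H →L[ℂ] H)ˣ) : H →L[ℂ] H) * (B * (Tu : H →L[ℂ] H))
            * ((Tu⁻¹ : (H →L[ℂ] H)ˣ) : H →L[ℂ] H) := by rw [hBTu]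
        _ = ((Tu⁻¹ : (H →L[ℂ] H)ˣ) : H →L[ℂ] H) * B
            * ((Tu : H →L[ℂ] H) * ((Tu⁻¹ : (H →L[ℂ] H)ˣ) : H →L[ℂ] H)) := by
            simp only [mul_assoc]
        _ = ((Tu⁻¹ : (H →L[ℂ] H)ˣ) : H →L[ℂ] H) * B := by rw [Units.mul_inv, mul_one]
    intro x
    induction x using Int.induction_on with
    | zero => simp
    | succ k ih =>
        rw [zpow_add_one, Units.val_mul, ← mul_assoc, ih, mul_assoc, hBTu, ← mul_assoc]
    | pred k ih =>
        rw [zpow_sub_one, Units.val_mul, ← mul_assoc, ih, mul_assoc, hBinv, ← mul_assoc]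
  -- pointwise facts
  have hσe : σ e = e := by
    have h := hePp
    rw [hPp] at h
    have h2 : (2⁻¹ : ℂ) • (e + σ e) = e := by
      simpa [ContinuousLinearMap.add_apply] using h
    have h3 : e + σ e = (2 : ℂ) • e := by
      have h4 := congrArg (fun u => (2 : ℂ) • u) h2
      simpa [smul_smul] using h4
    calc σ e = (e + σ e) - e := by abel
      _ = (2 : ℂ) • e - e := by rw [h3]
      _ = e := by rw [two_smul]; abel
  have hεσ : σ (ε e) = -(ε e) := by
    have hcalc : σ * (V * W) = -(V * (W * σ)) := by
      rw [← mul_assoc, hσV, mul_assoc, hσW, mul_neg]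
    have happ := congrArg (fun F : H →L[ℂ] H => F e) hcalc
    simp only [ContinuousLinearMap.mul_apply, ContinuousLinearMap.neg_apply] at happ
    rw [hσe] at happ
    rw [hε]
    exact happ
  have hTplus : ∀ u : H, σ u = u → T u = V u := by
    intro u hu
    have hσVu : σ (V u) = V u := by
      have h := congrArg (fun F : H →L[ℂ] H => F u) hσV
      simpa [ContinuousLinearMap.mul_apply, hu] using h
    have hσAu : σ (adjoint V u) = adjoint V u := by
      have h := congrArg (fun F : H →L[ℂ] H => F u) hσA
      simpa [ContinuousLinearMap.mul_apply, hu] using h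
    rw [hTe']
    simp only [ContinuousLinearMap.smul_apply, ContinuousLinearMap.add_apply,
      ContinuousLinearMap.sub_apply, ContinuousLinearMap.mul_apply]
    rw [hσVu, hσAu]
    have h5 : V u + adjoint V u + (V u - adjoint V u) = (2 : ℂ) • V u := by
      rw [two_smul]; abel
    rw [h5, smul_smul]
    norm_num
  have hTminus : ∀ u : H, σ u = -u → T u = adjoint V u := by
    intro u hu
    have hσVu : σ (V u) = -(V u) := by
      have h := congrArg (fun F : H →L[ℂ] H => F u) hσV
      simp only [ContinuousLinearMap.mul_apply, hu, map_neg] at h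
      exact h
    have hσAu : σ (adjoint V u) = -(adjoint V u) := by
      have h := congrArg (fun F : H →L[ℂ] H => F u) hσA
      simp only [ContinuousLinearMap.mul_apply, hu, map_neg] at h
      exact h
    rw [hTe']
    simp only [ContinuousLinearMap.smul_apply, ContinuousLinearMap.add_apply,
      ContinuousLinearMap.sub_apply, ContinuousLinearMap.mul_apply]
    rw [hσVu, hσAu]
    have h5 : V u + adjoint V u + (-(V u) - -(adjoint V u)) = (2 : ℂ) • adjoint V u := by
      rw [two_smul]; abel
    rw [h5, smul_smul]
    norm_num
  -- pointwise values of T on key vectors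
  have hE1 : T e = V e := hTplus e hσe
  have hσVε : σ (V (ε e)) = -(V (ε e)) := by
    have h := congrArg (fun F : H →L[ℂ] H => F (ε e)) hσV
    simp only [ContinuousLinearMap.mul_apply] at h
    rw [hεσ, map_neg] at h
    exact h
  have hAVpt : ∀ u : H, adjoint V (V u) = u := by
    intro u
    have h := congrArg (fun F : H →L[ℂ] H => F u) hAV
    simpa [ContinuousLinearMap.mul_apply] using h
  have hVApt : ∀ u : H, V (adjoint V u) = u := by
    intro u
    have h := congrArg (fun F : H →L[ℂ] H => F u) hVA
    simpa [ContinuousLinearMap.mul_apply] using h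
  have hE2 : T (V (ε e)) = ε e := by
    rw [hTminus _ hσVε, hAVpt]
  have hE3 : T (ε e) = W e := by
    rw [hTminus _ hεσ, hε]
    exact hAVpt (W e)
  have hσAe : σ (adjoint V e) = adjoint V e := by
    have h := congrArg (fun F : H →L[ℂ] H => F e) hσA
    simp only [ContinuousLinearMap.mul_apply] at h
    rw [hσe] at h
    exact h
  have hE4 : T (adjoint V e) = e := by
    rw [hTplus _ hσAe, hVApt]
  -- inverses through Tu
  have hTuapp : ∀ u : H, (Tu : H →L[ℂ] H) u = T u := fun u => by rw [hTu]
  have hInv : ∀ u v : H, T u = v → ((Tu⁻¹ : (H →L[ℂ] H)ˣ) : H →L[ℂ] H) v = u := by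
    intro u v huv
    rw [← huv, ← hTuapp]
    have h : ((Tu⁻¹ : (H →L[ℂ] H)ˣ) : H →L[ℂ] H) ((Tu : H →L[ℂ] H) u)
        = (((Tu⁻¹ * Tu : (H →L[ℂ] H)ˣ)) : H →L[ℂ] H) u := by
      rw [Units.val_mul]; rfl
    rw [h, inv_mul_cancel, Units.val_one, ContinuousLinearMap.one_apply]
  -- the master shift fact
  have hF : ∀ (B : H →L[ℂ] H), B * T = T * B → ∀ (u w : H) (k : ℤ),
      B u = ((Tu ^ k : (H →L[ℂ] H)ˣ) : H →L[ℂ] H) w → ∀ x : ℤ,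
      B (((Tu ^ x : (H →L[ℂ] H)ˣ) : H →L[ℂ] H) u)
        = ((Tu ^ (x + k) : (H →L[ℂ] H)ˣ) : H →L[ℂ] H) w := by
    intro B hB u w k hk x
    calc B (((Tu ^ x : (H →L[ℂ] H)ˣ) : H →L[ℂ] H) u)
        = (B * ((Tu ^ x : (H →L[ℂ] H)ˣ) : H →L[ℂ] H)) u := rfl
      _ = (((Tu ^ x : (H →L[ℂ] H)ˣ) : H →L[ℂ] H) * B) u := by rw [commA B hB x]
      _ = ((Tu ^ x : (H →L[ℂ] H)ˣ) : H →L[ℂ] H) (B u) := rfl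
      _ = ((Tu ^ x : (H →L[ℂ] H)ˣ) : H →L[ℂ] H)
            (((Tu ^ k : (H →L[ℂ] H)ˣ) : H →L[ℂ] H) w) := by rw [hk]
      _ = (((Tu ^ x : (H →L[ℂ] H)ˣ) : H →L[ℂ] H)
            * ((Tu ^ k : (H →L[ℂ] H)ˣ) : H →L[ℂ] H)) w := rfl
      _ = ((Tu ^ (x + k) : (H →L[ℂ] H)ˣ) : H →L[ℂ] H) w := by
            rw [← Units.val_mul, ← zpow_add]
  -- shift identities for the basis vectors
  have F1 : ∀ x : ℤ, V (e1 x) = e1 (x + 1) := by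
    intro x
    rw [he1, he1]
    exact hF V hVT e e 1 (by rw [zpow_one, hTuapp]; exact hE1.symm) x
  have F2 : ∀ x : ℤ, V (e2 x) = e2 (x - 1) := by
    intro x
    rw [he2, he2]
    have h := hF V hVT (ε e) (ε e) (-1)
      (by
        have h1 : (Tu ^ (-1 : ℤ) : (H →L[ℂ] H)ˣ) = Tu⁻¹ := zpow_neg_one Tu
        rw [h1]
        exact (hInv _ _ hE2).symm) x
    rwa [show x + (-1 : ℤ) = x - 1 by ring] at h
  have F3 : ∀ x : ℤ, W (e1 x) = e2 (x + 1) := by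
    intro x
    rw [he1, he2]
    exact hF W hWT e (ε e) 1 (by rw [zpow_one, hTuapp]; exact hE3.symm) x
  have hWεe : W (ε e) = ((Tu ^ (-1 : ℤ) : (H →L[ℂ] H)ˣ) : H →L[ℂ] H) (-e) := by
    have h1 : W (ε e) = -(adjoint V e) := by
      rw [hε]
      have hcalc : W * (V * W) = -(adjoint V) := by
        rw [← mul_assoc, ← hAW, mul_assoc, hWW, mul_neg, mul_one]
      have h := congrArg (fun F : H →L[ℂ] H => F e) hcalc
      simpa [ContinuousLinearMap.mul_apply, ContinuousLinearMap.neg_apply] using h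
    have h2 : (Tu ^ (-1 : ℤ) : (H →L[ℂ] H)ˣ) = Tu⁻¹ := zpow_neg_one Tu
    rw [h1, h2, map_neg, hInv _ _ hE4]
  have F4 : ∀ x : ℤ, W (e2 x) = -(e1 (x - 1)) := by
    intro x
    rw [he2, he1]
    have h := hF W hWT (ε e) (-e) (-1) hWεe x
    rw [show x + (-1 : ℤ) = x - 1 by ring] at h
    rw [h, map_neg]
  have F5 : ∀ x : ℤ, σ (e1 x) = e1 x := by
    intro x
    rw [he1]
    have h := hF σ hσT e e 0 (by rw [zpow_zero, Units.val_one, ContinuousLinearMap.one_apply]; exact hσe) x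
    rwa [add_zero] at h
  have F6 : ∀ x : ℤ, σ (e2 x) = -(e2 x) := by
    intro x
    rw [he2]
    have h := hF σ hσT (ε e) (-(ε e)) 0
      (by rw [zpow_zero, Units.val_one, ContinuousLinearMap.one_apply]; exact hεσ) x
    rw [add_zero] at h
    rw [h, map_neg]
  -- inner-product tools
  have ipV : ∀ u v : H, (inner ℂ (V u) (V v) : ℂ) = inner ℂ u v := by
    intro u v
    have h := ContinuousLinearMap.adjoint_inner_right V u (V v)
    rw [hAVpt] at h
    exact h.symm
  have hAWpt : ∀ u : H, adjoint W (W u) = u := by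
    intro u
    have h := congrArg (fun F : H →L[ℂ] H => F u) hAWW
    simpa [ContinuousLinearMap.mul_apply] using h
  have ipW : ∀ u v : H, (inner ℂ (W u) (W v) : ℂ) = inner ℂ u v := by
    intro u v
    have h := ContinuousLinearMap.adjoint_inner_right W u (W v)
    rw [hAWpt] at h
    exact h.symm
  have ipσ : ∀ u v : H, (inner ℂ (σ u) v : ℂ) = inner ℂ u (σ v) := by
    intro u v
    have h := ContinuousLinearMap.adjoint_inner_left σ v u
    rwa [hQW4] at h
  -- cross orthogonality
  have hX12 : ∀ x y : ℤ, (inner ℂ (e1 x) (e2 y) : ℂ) = 0 := by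
    intro x y
    have h : (inner ℂ (e1 x) (e2 y) : ℂ) = -(inner ℂ (e1 x) (e2 y) : ℂ) := by
      conv_lhs => rw [← F5 x]
      rw [ipσ, F6 y, inner_neg_right, ← F5 x]
    linear_combination (1/2 : ℂ) * h
  have hX21 : ∀ x y : ℤ, (inner ℂ (e2 x) (e1 y) : ℂ) = 0 := by
    intro x y
    rw [← inner_conj_symm, hX12 y x, map_zero]
  -- shift invariance of inner products
  have sh1 : ∀ x y : ℤ, (inner ℂ (e1 x) (e1 y) : ℂ) = inner ℂ (e1 (x + 1)) (e1 (y + 1)) := by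
    intro x y
    rw [← F1 x, ← F1 y, ipV]
  have sh2 : ∀ x y : ℤ, (inner ℂ (e2 x) (e2 y) : ℂ) = inner ℂ (e2 (x - 1)) (e2 (y - 1)) := by
    intro x y
    rw [← F2 x, ← F2 y, ipV]
  have sh1z : ∀ (k x y : ℤ), (inner ℂ (e1 x) (e1 y) : ℂ) = inner ℂ (e1 (x + k)) (e1 (y + k)) := by
    intro k
    induction k using Int.induction_on with
    | zero => intro x y; rw [add_zero, add_zero]
    | succ m ih =>
        intro x y
        rw [show x + ((m : ℤ) + 1) = (x + m) + 1 by ring,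
          show y + ((m : ℤ) + 1) = (y + m) + 1 by ring]
        rw [ih x y, sh1]
    | pred m ih =>
        intro x y
        rw [show x + (-(m : ℤ) - 1) = (x + -(m : ℤ)) - 1 by ring,
          show y + (-(m : ℤ) - 1) = (y + -(m : ℤ)) - 1 by ring]
        rw [ih x y, sh1 (x + -(m : ℤ) - 1) (y + -(m : ℤ) - 1),
          show x + -(m : ℤ) - 1 + 1 = x + -(m : ℤ) by ring,
          show y + -(m : ℤ) - 1 + 1 = y + -(m : ℤ) by ring]
  have sh2z : ∀ (k x y : ℤ), (inner ℂ (e2 x) (e2 y) : ℂ) = inner ℂ (e2 (x + k)) (e2 (y + k)) := by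
    intro k
    induction k using Int.induction_on with
    | zero => intro x y; rw [add_zero, add_zero]
    | succ m ih =>
        intro x y
        rw [show x + ((m : ℤ) + 1) = (x + m) + 1 by ring,
          show y + ((m : ℤ) + 1) = (y + m) + 1 by ring]
        rw [ih x y, sh2 (x + m + 1) (y + m + 1), add_sub_cancel_right, add_sub_cancel_right]
    | pred m ih =>
        intro x y
        rw [show x + (-(m : ℤ) - 1) = (x + -(m : ℤ)) - 1 by ring,
          show y + (-(m : ℤ) - 1) = (y + -(m : ℤ)) - 1 by ring]
        rw [ih x y, sh2]
  have red1 : ∀ x y : ℤ, (inner ℂ (e1 x) (e1 y) : ℂ) = inner ℂ (e1 0) (e1 (y - x)) := by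
    intro x y
    have h := sh1z (-x) x y
    rwa [show x + -x = (0 : ℤ) by ring, show y + -x = y - x by ring] at h
  have red2 : ∀ x y : ℤ, (inner ℂ (e2 x) (e2 y) : ℂ) = inner ℂ (e2 0) (e2 (y - x)) := by
    intro x y
    have h := sh2z (-x) x y
    rwa [show x + -x = (0 : ℤ) by ring, show y + -x = y - x by ring] at h
  -- explicit forms on naturals
  have he10 : e1 0 = e := by
    rw [he1]
    rw [zpow_zero, Units.val_one, ContinuousLinearMap.one_apply]
  have he20 : e2 0 = ε e := by
    rw [he2]
    rw [zpow_zero, Units.val_one, ContinuousLinearMap.one_apply]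
  have hE1n : ∀ m : ℕ, e1 (m : ℤ) = (V ^ m) e := by
    intro m
    induction m with
    | zero => simpa using he10
    | succ k ih =>
        rw [show ((k + 1 : ℕ) : ℤ) = (k : ℤ) + 1 by push_cast; ring, ← F1, ih, pow_succ']
        rfl
  have hE2n : ∀ m : ℕ, e2 (-(m : ℤ)) = (V ^ m) (e2 0) := by
    intro m
    induction m with
    | zero => simp
    | succ k ih =>
        rw [show -((k + 1 : ℕ) : ℤ) = -(k : ℤ) - 1 by push_cast; ring, ← F2, ih, pow_succ']
        rfl
  have horth' : ∀ m : ℕ, 0 < m → (inner ℂ e ((V ^ m) e) : ℂ) = 0 := by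
    intro m hm
    rw [← inner_conj_symm, horth m hm, map_zero]
  have innee : (inner ℂ e e : ℂ) = 1 := by
    rw [inner_self_eq_norm_sq_to_K, he]
    norm_num
  -- delta for e1
  have δ1 : ∀ k : ℤ, (inner ℂ (e1 0) (e1 k) : ℂ) = if k = 0 then 1 else 0 := by
    intro k
    rcases lt_trichotomy k 0 with hk | hk | hk
    · rw [if_neg (by omega)]
      have hmk : (((-k).toNat : ℤ)) = -k := Int.toNat_of_nonneg (by omega)
      rw [← inner_conj_symm, red1 k 0, zero_sub, ← hmk, hE1n, he10,
        horth' ((-k).toNat) (by omega), map_zero]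
    · rw [hk, if_pos rfl, he10, innee]
    · rw [if_neg (by omega)]
      have hmk : ((k.toNat : ℤ)) = k := Int.toNat_of_nonneg (by omega)
      rw [← hmk, hE1n, he10, horth' _ (by omega)]
  -- powers of V vs W
  have hVmW : ∀ m : ℕ, V ^ m * W = W * (adjoint V) ^ m := by
    intro m
    induction m with
    | zero => simp
    | succ k ih =>
        rw [pow_succ', mul_assoc, ih, ← mul_assoc, hVW, mul_assoc, ← pow_succ']
  have ipAm : ∀ (m : ℕ) (u v : H), (inner ℂ u (((adjoint V) ^ m) v) : ℂ) = inner ℂ ((V ^ m) u) v := by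
    intro m
    induction m with
    | zero => intro u v; simp
    | succ k ih =>
        intro u v
        have h1 : ((adjoint V) ^ (k + 1)) v = ((adjoint V) ^ k) (adjoint V v) := by
          rw [pow_succ]; rfl
        have h2 : (V ^ (k + 1)) u = (V ^ k) (V u) := by
          rw [pow_succ]; rfl
        rw [h1, h2, ih, ContinuousLinearMap.adjoint_inner_right]
        have h3 : V * V ^ k = V ^ k * V := by rw [← pow_succ', ← pow_succ]
        have h4 : V ((V ^ k) u) = (V ^ k) (V u) := congrArg (fun F : H →L[ℂ] H => F u) h3
        rw [h4]
  -- delta for e2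
  have hεεinner : (inner ℂ (ε e) (ε e) : ℂ) = 1 := by
    rw [hε]
    have h : (V ∘L W) e = V (W e) := rfl
    rw [h, ipV, ipW, innee]
  have δ2neg : ∀ m : ℕ, 0 < m → (inner ℂ (e2 0) (e2 (-(m : ℤ))) : ℂ) = 0 := by
    intro m hm
    rw [hE2n m, he20, hε]
    have hswap : (V ^ m) ((V ∘L W) e) = V ((V ^ m) (W e)) := by
      have hop : V ^ m * (V * W) = V * (V ^ m * W) := by
        rw [← mul_assoc, ← pow_succ, pow_succ', mul_assoc]
      exact congrArg (fun F : H →L[ℂ] H => F e) hop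
    have h0 : (V ∘L W) e = V (W e) := rfl
    rw [h0] at hswap ⊢
    rw [hswap, ipV]
    have hWm : (V ^ m) (W e) = W (((adjoint V) ^ m) e) :=
      congrArg (fun F : H →L[ℂ] H => F e) (hVmW m)
    rw [hWm, ipW, ipAm, horth m hm]
  have δ2 : ∀ k : ℤ, (inner ℂ (e2 0) (e2 k) : ℂ) = if k = 0 then 1 else 0 := by
    intro k
    rcases lt_trichotomy k 0 with hk | hk | hk
    · rw [if_neg (by omega)]
      have hmk : (((-k).toNat : ℤ)) = -k := Int.toNat_of_nonneg (by omega)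
      have h := δ2neg (-k).toNat (by omega)
      rwa [hmk, neg_neg] at h
    · rw [hk, if_pos rfl, he20, hεεinner]
    · rw [if_neg (by omega)]
      rw [← inner_conj_symm, red2 k 0, zero_sub]
      have hmk : ((k.toNat : ℤ)) = k := Int.toNat_of_nonneg (by omega)
      have h := δ2neg k.toNat (by omega)
      rw [hmk] at h
      rw [h, map_zero]
  have δ1' : ∀ x y : ℤ, (inner ℂ (e1 x) (e1 y) : ℂ) = if y = x then 1 else 0 := by
    intro x y
    rw [red1 x y, δ1 (y - x)]
    by_cases h : y = x
    · rw [if_pos (by omega), if_pos h]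
    · rw [if_neg (by omega), if_neg h]
  have δ2' : ∀ x y : ℤ, (inner ℂ (e2 x) (e2 y) : ℂ) = if y = x then 1 else 0 := by
    intro x y
    rw [red2 x y, δ2 (y - x)]
    by_cases h : y = x
    · rw [if_pos (by omega), if_pos h]
    · rw [if_neg (by omega), if_neg h]
  -- action of U on basis
  have hUe1 : ∀ x : ℤ, U (e1 x) = (s : ℂ) • e1 (x + 1) + (t : ℂ) • e2 (x + 1) := by
    intro x
    rw [hU]
    simp only [ContinuousLinearMap.add_apply, ContinuousLinearMap.smul_apply]
    rw [F1, F3]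
  have hUe2 : ∀ x : ℤ, U (e2 x) = (s : ℂ) • e2 (x - 1) + (t : ℂ) • (-(e1 (x - 1))) := by
    intro x
    rw [hU]
    simp only [ContinuousLinearMap.add_apply, ContinuousLinearMap.smul_apply]
    rw [F2, F4]
  -- main induction
  have main : ∀ n : ℕ, (U ^ n) Ψ =
      QWAux.LC e1 (ψ₁ • pn1 s n + ψ₂ • qn1 s t n)
        + QWAux.LC e2 (ψ₁ • pn2 s t n + ψ₂ • qn2 s n) := by
    intro n
    induction n with
    | zero =>
        rw [pow_zero, ContinuousLinearMap.one_apply, hΨ]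
        rw [QWAux.base1, QWAux.base2 s t, QWAux.base3 s t, QWAux.base4]
        simp only [smul_zero, add_zero, zero_add]
        rw [QWAux.LC_smul, QWAux.LC_smul, QWAux.LC_one, QWAux.LC_one]
    | succ n ih =>
        have hP : (U ^ (n + 1)) Ψ = U ((U ^ n) Ψ) := by
          rw [pow_succ']; rfl
        rw [hP, ih, map_add, QWAux.LC_map U e1, QWAux.LC_map U e2]
        rw [QWAux.LC_congr _ _ _ hUe1, QWAux.LC_congr _ _ _ hUe2]
        rw [QWAux.LC_fun_add, QWAux.LC_fun_smul, QWAux.LC_fun_smul]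
        rw [QWAux.LC_fun_add, QWAux.LC_fun_smul, QWAux.LC_fun_smul]
        have hsh1 : QWAux.LC (fun x => e1 (x + 1)) (ψ₁ • pn1 s n + ψ₂ • qn1 s t n)
            = QWAux.LC e1 (LaurentPolynomial.T 1 * (ψ₁ • pn1 s n + ψ₂ • qn1 s t n)) :=
          QWAux.LC_shift e1 1 _
        have hsh2 : QWAux.LC (fun x => e2 (x + 1)) (ψ₁ • pn1 s n + ψ₂ • qn1 s t n)
            = QWAux.LC e2 (LaurentPolynomial.T 1 * (ψ₁ • pn1 s n + ψ₂ • qn1 s t n)) :=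
          QWAux.LC_shift e2 1 _
        have hsh3 : QWAux.LC (fun x => e2 (x - 1)) (ψ₁ • pn2 s t n + ψ₂ • qn2 s n)
            = QWAux.LC e2 (LaurentPolynomial.T (-1) * (ψ₁ • pn2 s t n + ψ₂ • qn2 s n)) := by
          rw [← QWAux.LC_shift e2 (-1)]
          exact QWAux.LC_congr _ _ _ (fun x => by rw [sub_eq_add_neg])
        have hsh4 : QWAux.LC (fun x => -(e1 (x - 1))) (ψ₁ • pn2 s t n + ψ₂ • qn2 s n)
            = -(QWAux.LC e1 (LaurentPolynomial.T (-1) * (ψ₁ • pn2 s t n + ψ₂ • qn2 s n))) := by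
          rw [QWAux.LC_congr _ (fun x => -(e1 (x + -1))) _ (fun x => by rw [sub_eq_add_neg]),
            QWAux.LC_fun_neg, QWAux.LC_shift e1 (-1)]
        rw [hsh1, hsh2, hsh3, hsh4]
        have hpoly1 : ψ₁ • pn1 s (n + 1) + ψ₂ • qn1 s t (n + 1)
            = (s : ℂ) • (LaurentPolynomial.T 1 * (ψ₁ • pn1 s n + ψ₂ • qn1 s t n))
              - (t : ℂ) • (LaurentPolynomial.T (-1) * (ψ₁ • pn2 s t n + ψ₂ • qn2 s n)) := by
          rw [QWAux.R1 s t n hst, QWAux.R3 s t n hst]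
          simp only [mul_add, mul_smul_comm, smul_add, smul_sub, smul_smul]
          rw [mul_comm ψ₁ ((s:ℂ)), mul_comm ψ₁ ((t:ℂ)), mul_comm ψ₂ ((s:ℂ)), mul_comm ψ₂ ((t:ℂ))]
          abel
        have hpoly2 : ψ₁ • pn2 s t (n + 1) + ψ₂ • qn2 s (n + 1)
            = (t : ℂ) • (LaurentPolynomial.T 1 * (ψ₁ • pn1 s n + ψ₂ • qn1 s t n))
              + (s : ℂ) • (LaurentPolynomial.T (-1) * (ψ₁ • pn2 s t n + ψ₂ • qn2 s n)) := by
          rw [QWAux.R2 s t n hst, QWAux.R4 s t n hst]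
          simp only [mul_add, mul_smul_comm, smul_add, smul_sub, smul_smul]
          rw [mul_comm ψ₁ ((s:ℂ)), mul_comm ψ₁ ((t:ℂ)), mul_comm ψ₂ ((s:ℂ)), mul_comm ψ₂ ((t:ℂ))]
          abel
        rw [hpoly1, hpoly2, QWAux.LC_sub, QWAux.LC_add, QWAux.LC_smul, QWAux.LC_smul,
          QWAux.LC_smul, QWAux.LC_smul]
        simp only [smul_neg]
        abel
  -- conclusion
  intro n x
  constructor
  · rw [main n, inner_add_right]
    rw [QWAux.inner_LC_delta (e1 x) e1 _ x (fun y => δ1' x y)]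
    rw [QWAux.inner_LC_zero (e1 x) e2 _ (fun y => hX12 x y), add_zero]
    rw [AddMonoidAlgebra.coeff_add, AddMonoidAlgebra.coeff_smul, AddMonoidAlgebra.coeff_smul, Finsupp.add_apply, Finsupp.smul_apply, Finsupp.smul_apply, smul_eq_mul, smul_eq_mul]
  · rw [main n, inner_add_right]
    rw [QWAux.inner_LC_delta (e2 x) e2 _ x (fun y => δ2' x y)]
    rw [QWAux.inner_LC_zero (e2 x) e1 _ (fun y => hX21 x y), zero_add]
    rw [AddMonoidAlgebra.coeff_add, AddMonoidAlgebra.coeff_smul, AddMonoidAlgebra.coeff_smul, Finsupp.add_apply, Finsupp.smul_apply, Finsupp.smul_apply, smul_eq_mul, smul_eq_mul]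
end

section
/- The Laurent polynomials p_n¹, p_n², q_n¹, q_n² have real coefficients, and for every n ≥ 0 and x ∈ ℤ, q_n(ψ;x) = |ψ₁|²[c_x(p_n¹)² + c_x(p_n²)²] + |ψ₂|²[c_x(q_n¹)² + c_x(q_n²)²] + 2 Re(ψ₁ ψ̄₂)[c_x(p_n¹) c_x(q_n¹) + c_x(p_n²) c_x(q_n²)]. -/
namespace QWaux
open LaurentPolynomial

noncomputable def dArg (s : ℝ) : LaurentPolynomial ℂ :=
  ((s : ℂ) / 2) • (LaurentPolynomial.T 1 - LaurentPolynomial.T (-1))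

lemma smul_eq_C_mul (a : ℂ) (p : LaurentPolynomial ℂ) : a • p = C a * p := by
  rw [C_eq_algebraMap, ← Algebra.smul_def]

lemma zArg_eq (s : ℝ) : zArg s = C ((s:ℂ)/2) * (T 1 + T (-1)) := by
  rw [zArg, smul_eq_C_mul]

lemma dArg_eq (s : ℝ) : dArg s = C ((s:ℂ)/2) * (T 1 - T (-1)) := by
  rw [dArg, smul_eq_C_mul]

lemma sT1 (s : ℝ) : C (s:ℂ) * T 1 = zArg s + dArg s := by
  rw [zArg_eq, dArg_eq]
  have : (C (s:ℂ) : LaurentPolynomial ℂ) = C ((s:ℂ)/2) + C ((s:ℂ)/2) := by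
    rw [← map_add]; norm_num
  rw [this]; ring

lemma sTm1 (s : ℝ) : C (s:ℂ) * T (-1) = zArg s - dArg s := by
  rw [zArg_eq, dArg_eq]
  have : (C (s:ℂ) : LaurentPolynomial ℂ) = C ((s:ℂ)/2) + C ((s:ℂ)/2) := by
    rw [← map_add]; norm_num
  rw [this]; ring

lemma T1mT : (T 1 * T (-1) : LaurentPolynomial ℂ) = 1 := by
  rw [← T_add]; norm_num

lemma w_sq_sub_d_sq (s : ℝ) :
    zArg s * zArg s - dArg s * dArg s = C ((s:ℂ)^2) := by
  have h1 : zArg s * zArg s - dArg s * dArg s = (zArg s + dArg s) * (zArg s - dArg s) := by ring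
  rw [h1, ← sT1, ← sTm1]
  have : C (s:ℂ) * T 1 * (C (s:ℂ) * T (-1)) = C (s:ℂ) * C (s:ℂ) * (T 1 * T (-1)) := by ring
  rw [this, T1mT, ← map_mul, mul_one, sq]

lemma chebT_rec (s : ℝ) (n : ℤ) :
    chebTz s (n + 1) = zArg s * chebTz s n - (1 - zArg s * zArg s) * chebUz s (n - 1) := by
  have h := congrArg (Polynomial.aeval (zArg s)) (Polynomial.Chebyshev.T_eq_X_mul_T_sub_pol_U ℂ (n - 1))
  simp only [map_sub, map_mul, map_one, map_pow, Polynomial.aeval_X] at h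
  have e1 : n - 1 + 2 = n + 1 := by ring
  have e2 : n - 1 + 1 = n := by ring
  rw [e1, e2] at h
  simpa [chebTz, chebUz, sq] using h

lemma chebU_rec (s : ℝ) (n : ℤ) :
    chebUz s n = zArg s * chebUz s (n - 1) + chebTz s n := by
  have h := congrArg (Polynomial.aeval (zArg s)) (Polynomial.Chebyshev.U_eq_X_mul_U_add_T ℂ (n - 1))
  simp only [map_add, map_mul, Polynomial.aeval_X] at h
  have e2 : n - 1 + 1 = n := by ring
  rw [e2] at h
  simpa [chebTz, chebUz] using h

lemma pn1_eq (s : ℝ) (n : ℕ) : pn1 s n = chebTz s n + dArg s * chebUz s ((n:ℤ) - 1) := by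
  rw [pn1, smul_eq_C_mul, dArg_eq]; ring

lemma pn2_eq (s t : ℝ) (n : ℕ) : pn2 s t n = C (t:ℂ) * (T 1 * chebUz s ((n:ℤ) - 1)) := by
  rw [pn2, smul_eq_C_mul]

lemma qn1_eq (s t : ℝ) (n : ℕ) : qn1 s t n = -(C (t:ℂ) * (T (-1) * chebUz s ((n:ℤ) - 1))) := by
  rw [qn1, smul_eq_C_mul]

lemma qn2_eq (s : ℝ) (n : ℕ) : qn2 s n = chebTz s n - dArg s * chebUz s ((n:ℤ) - 1) := by
  rw [qn2, smul_eq_C_mul, dArg_eq]; ring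

lemma hCst {s t : ℝ} (hst : s^2 + t^2 = 1) :
    C (s:ℂ) * C (s:ℂ) + C (t:ℂ) * C (t:ℂ) = (1 : LaurentPolynomial ℂ) := by
  rw [← map_mul, ← map_mul, ← map_add, ← map_one C]
  congr 1
  have : ((s:ℂ)^2 + (t:ℂ)^2) = ((s^2 + t^2 : ℝ) : ℂ) := by push_cast; ring
  rw [← sq, ← sq, this, hst]; norm_num

lemma w_sq_sub_d_sq' (s : ℝ) :
    zArg s * zArg s - dArg s * dArg s = C (s:ℂ) * C (s:ℂ) := by
  rw [w_sq_sub_d_sq, ← map_mul, sq]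

section rec
variable {s t : ℝ} (n : ℕ)

lemma R1 (hst : s^2 + t^2 = 1) : pn1 s (n+1) = (s:ℂ) • (T 1 * pn1 s n) - (t:ℂ) • (T (-1) * pn2 s t n) := by
  have h1 := chebT_rec s n
  have h2 := chebU_rec s n
  have h3 := w_sq_sub_d_sq' s
  have h4 := sT1 s
  have h6 := T1mT
  have h7 := hCst hst
  rw [pn1_eq, pn1_eq, pn2_eq, smul_eq_C_mul, smul_eq_C_mul]
  push_cast
  rw [add_sub_cancel_right]
  linear_combination h1 + dArg s * h2 - (chebTz s n + dArg s * chebUz s ((n:ℤ)-1)) * h4 +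
    chebUz s ((n:ℤ)-1) * h3 + (C (t:ℂ) * C (t:ℂ) * chebUz s ((n:ℤ)-1)) * h6 +
    chebUz s ((n:ℤ)-1) * h7

lemma R2 : pn2 s t (n+1) = (t:ℂ) • (T 1 * pn1 s n) + (s:ℂ) • (T (-1) * pn2 s t n) := by
  have h2 := chebU_rec s n
  have h5 := sTm1 s
  rw [pn2_eq, pn1_eq, pn2_eq, smul_eq_C_mul, smul_eq_C_mul]
  push_cast
  rw [add_sub_cancel_right]
  linear_combination C (t:ℂ) * T 1 * h2 - C (t:ℂ) * T 1 * chebUz s ((n:ℤ)-1) * h5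

lemma R3 : qn1 s t (n+1) = (s:ℂ) • (T 1 * qn1 s t n) - (t:ℂ) • (T (-1) * qn2 s n) := by
  have h2 := chebU_rec s n
  have h4 := sT1 s
  rw [qn1_eq, qn1_eq, qn2_eq, smul_eq_C_mul, smul_eq_C_mul]
  push_cast
  rw [add_sub_cancel_right]
  linear_combination (- (C (t:ℂ) * T (-1))) * h2 + C (t:ℂ) * T (-1) * chebUz s ((n:ℤ)-1) * h4

lemma R4 (hst : s^2 + t^2 = 1) : qn2 s (n+1) = (t:ℂ) • (T 1 * qn1 s t n) + (s:ℂ) • (T (-1) * qn2 s n) := by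
  have h1 := chebT_rec s n
  have h2 := chebU_rec s n
  have h3 := w_sq_sub_d_sq' s
  have h5 := sTm1 s
  have h6 := T1mT
  have h7 := hCst hst
  rw [qn2_eq, qn1_eq, qn2_eq, smul_eq_C_mul, smul_eq_C_mul]
  push_cast
  rw [add_sub_cancel_right]
  linear_combination h1 - dArg s * h2 + (- chebTz s n + dArg s * chebUz s ((n:ℤ)-1)) * h5 +
    chebUz s ((n:ℤ)-1) * h3 + (C (t:ℂ) * C (t:ℂ) * chebUz s ((n:ℤ)-1)) * h6 +
    chebUz s ((n:ℤ)-1) * h7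

end rec

lemma T_mul_apply (k : ℤ) (p : LaurentPolynomial ℂ) (x : ℤ) :
    (T k * p : LaurentPolynomial ℂ).coeff x = p.coeff (x - k) := by
  have h := AddMonoidAlgebra.coeff_single_mul_apply p (1:ℂ) k x
  rw [neg_add_eq_sub, one_mul] at h
  exact h

lemma smul_apply' (a : ℂ) (p : LaurentPolynomial ℂ) (x : ℤ) : (a • p).coeff x = a * p.coeff x := by
  rw [AddMonoidAlgebra.coeff_smul_apply, smul_eq_mul]

lemma one_apply (x : ℤ) : (1 : LaurentPolynomial ℂ).coeff x = if x = 0 then 1 else 0 := by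
  rw [← T_zero (R := ℂ), T_apply]
  simp [eq_comm]

lemma chebTz_zero (s : ℝ) : chebTz s 0 = 1 := by
  rw [chebTz, Polynomial.Chebyshev.T_zero, map_one]

lemma chebUz_neg_one (s : ℝ) : chebUz s (-1) = 0 := by
  rw [chebUz, Polynomial.Chebyshev.U_neg_one, map_zero]

lemma pn1_zero (s : ℝ) : pn1 s 0 = 1 := by
  rw [pn1]; norm_num [chebTz_zero, chebUz_neg_one]

lemma pn2_zero (s t : ℝ) : pn2 s t 0 = 0 := by
  rw [pn2]; norm_num [chebUz_neg_one]

lemma qn1_zero (s t : ℝ) : qn1 s t 0 = 0 := by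
  rw [qn1]; norm_num [chebUz_neg_one]

lemma qn2_zero (s : ℝ) : qn2 s 0 = 1 := by
  rw [qn2]; norm_num [chebTz_zero, chebUz_neg_one]

variable {s t : ℝ}

lemma pn1_rec (hst : s^2 + t^2 = 1) (n : ℕ) (x : ℤ) :
    (pn1 s (n+1)).coeff x = s * (pn1 s n).coeff (x-1) - t * (pn2 s t n).coeff (x+1) := by
  rw [R1 n hst, AddMonoidAlgebra.coeff_sub, Finsupp.sub_apply, smul_apply', smul_apply', T_mul_apply, T_mul_apply,
    sub_neg_eq_add]

lemma pn2_rec (n : ℕ) (x : ℤ) :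
    (pn2 s t (n+1)).coeff x = t * (pn1 s n).coeff (x-1) + s * (pn2 s t n).coeff (x+1) := by
  rw [R2 (t := t) n, AddMonoidAlgebra.coeff_add, Finsupp.add_apply, smul_apply', smul_apply', T_mul_apply, T_mul_apply,
    sub_neg_eq_add]

lemma qn1_rec (n : ℕ) (x : ℤ) :
    (qn1 s t (n+1)).coeff x = s * (qn1 s t n).coeff (x-1) - t * (qn2 s n).coeff (x+1) := by
  rw [R3 (t := t) n, AddMonoidAlgebra.coeff_sub, Finsupp.sub_apply, smul_apply', smul_apply', T_mul_apply, T_mul_apply,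
    sub_neg_eq_add]

lemma qn2_rec (hst : s^2 + t^2 = 1) (n : ℕ) (x : ℤ) :
    (qn2 s (n+1)).coeff x = t * (qn1 s t n).coeff (x-1) + s * (qn2 s n).coeff (x+1) := by
  rw [R4 n hst, AddMonoidAlgebra.coeff_add, Finsupp.add_apply, smul_apply', smul_apply', T_mul_apply, T_mul_apply,
    sub_neg_eq_add]

lemma coeff_props (hst : s^2 + t^2 = 1) :
    ∀ (n : ℕ) (x : ℤ),
      (((pn1 s n).coeff x).im = 0 ∧ ((pn2 s t n).coeff x).im = 0 ∧ ((qn1 s t n).coeff x).im = 0 ∧ ((qn2 s n).coeff x).im = 0)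
      ∧ ((n:ℤ) < |x| →
          (pn1 s n).coeff x = 0 ∧ (pn2 s t n).coeff x = 0 ∧ (qn1 s t n).coeff x = 0 ∧ (qn2 s n).coeff x = 0) := by
  intro n
  induction n with
  | zero =>
    intro x
    rw [pn1_zero, pn2_zero, qn1_zero, qn2_zero]
    constructor
    · rw [one_apply]; split_ifs <;> simp
    · intro hx
      have hx0 : x ≠ 0 := by rw [Nat.cast_zero, lt_abs] at hx; omega
      rw [one_apply, if_neg hx0]
      simp
  | succ n ih =>
    intro x
    have h1 := (ih (x-1)).1
    have h2 := (ih (x+1)).1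
    rw [pn1_rec hst, pn2_rec, qn1_rec, qn2_rec hst]
    constructor
    · simp only [Complex.sub_im, Complex.add_im, Complex.mul_im, Complex.ofReal_im,
        Complex.ofReal_re, h1.1, h1.2.1, h1.2.2.1, h1.2.2.2, h2.1, h2.2.1, h2.2.2.1, h2.2.2.2]
      norm_num
    · intro hx
      rw [lt_abs] at hx
      have hxa : (n:ℤ) < |x - 1| := by rw [lt_abs]; push_cast at hx ⊢; omega
      have hxb : (n:ℤ) < |x + 1| := by rw [lt_abs]; push_cast at hx ⊢; omega
      have ha := (ih (x-1)).2 hxa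
      have hb := (ih (x+1)).2 hxb
      simp [ha.1, ha.2.1, ha.2.2.1, ha.2.2.2, hb.1, hb.2.1, hb.2.2.1, hb.2.2.2]

/-- reindexing a shifted sum over an interval -/
lemma sum_shift {M : Type*} [AddCommMonoid M] (c : ℤ → M) (k a b : ℤ) :
    ∑ x ∈ Finset.Icc a b, c (x + k) = ∑ y ∈ Finset.Icc (a+k) (b+k), c y := by
  rw [← Finset.map_add_right_Icc a b k, Finset.sum_map]
  rfl

lemma sum_extend {M : Type*} [AddCommMonoid M] (c : ℤ → M) (a b a' b' : ℤ)
    (h1 : a' ≤ a) (h2 : b ≤ b') (h0 : ∀ x, x < a ∨ b < x → c x = 0) :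
    ∑ x ∈ Finset.Icc a b, c x = ∑ x ∈ Finset.Icc a' b', c x := by
  refine Finset.sum_subset (Finset.Icc_subset_Icc h1 h2) ?_
  intro x hx hnx
  rw [Finset.mem_Icc] at hx hnx
  exact h0 x (by omega)

lemma norm_sq_expand (ψ₁ ψ₂ : ℂ) (a c : ℝ) :
    ‖ψ₁ * (a:ℂ) + ψ₂ * (c:ℂ)‖^2
      = ‖ψ₁‖^2 * a^2 + ‖ψ₂‖^2 * c^2 + 2*(ψ₁ * (starRingEnd ℂ) ψ₂).re * (a*c) := by
  have h : ∀ z : ℂ, ‖z‖^2 = Complex.normSq z := fun z => by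
    rw [Complex.sq_norm]
  rw [h, h, h]
  simp [Complex.normSq_apply, Complex.add_re, Complex.add_im, Complex.mul_re, Complex.mul_im,
    Complex.ofReal_re, Complex.ofReal_im, Complex.conj_re, Complex.conj_im]
  ring

end QWaux

open ContinuousLinearMap

set_option maxHeartbeats 1000000 in
/-- The Laurent polynomials `p_nⁱ`, `q_nⁱ` have real coefficients, and the transition
probability `q_n(ψ;x)` is expressed through their coefficients. -/
theorem qw_probability_formula
    {H : Type*} [NormedAddCommGroup H] [InnerProductSpace ℂ H] [CompleteSpace H]
    (V W σ X Y T Pp Pm ε : H →L[ℂ] H)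
    (hVu : adjoint V ∘L V = 1 ∧ V ∘L adjoint V = 1)
    (hWu : adjoint W ∘L W = 1 ∧ W ∘L adjoint W = 1)
    (hσu : adjoint σ ∘L σ = 1 ∧ σ ∘L adjoint σ = 1)
    (hQW1 : W ∘L W = -1)
    (hQW2 : V ∘L W = W ∘L adjoint V)
    (hQW3W : σ ∘L W + W ∘L σ = 0)
    (hQW3V : σ ∘L V - V ∘L σ = 0)
    (hQW4 : adjoint σ = σ)
    (hX : X = (2 : ℂ)⁻¹ • (V + adjoint V))
    (hY : Y = (2 * Complex.I)⁻¹ • (V - adjoint V))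
    (hT : T = X + Complex.I • (σ ∘L Y))
    (hPp : Pp = (2 : ℂ)⁻¹ • (1 + σ))
    (hPm : Pm = (2 : ℂ)⁻¹ • (1 - σ))
    (hε : ε = V ∘L W)
    (e : H) (he : ‖e‖ = 1) (hePp : Pp e = e)
    (horth : ∀ m : ℕ, 0 < m → (inner ℂ ((V ^ m) e) e : ℂ) = 0)
    (Tu : (H →L[ℂ] H)ˣ) (hTu : (Tu : H →L[ℂ] H) = T)
    (e1 e2 : ℤ → H)
    (he1 : ∀ x : ℤ, e1 x = ((Tu ^ x : (H →L[ℂ] H)ˣ) : H →L[ℂ] H) e)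
    (he2 : ∀ x : ℤ, e2 x = ((Tu ^ x : (H →L[ℂ] H)ˣ) : H →L[ℂ] H) (ε e))
    (s t : ℝ) (hs0 : 0 < s) (hs1 : s < 1) (ht0 : 0 < t) (ht1 : t < 1)
    (hst : s ^ 2 + t ^ 2 = 1)
    (U : H →L[ℂ] H) (hU : U = (s : ℂ) • V + (t : ℂ) • W)
    (ψ₁ ψ₂ : ℂ) (hψ : ‖ψ₁‖ ^ 2 + ‖ψ₂‖ ^ 2 = 1)
    (Ψ : H) (hΨ : Ψ = ψ₁ • e1 0 + ψ₂ • e2 0)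
    (q : ℕ → ℤ → ℝ)
    (hq : ∀ n x, q n x =
      ‖(inner ℂ (e1 x) ((U ^ n) Ψ) : ℂ)‖ ^ 2 + ‖(inner ℂ (e2 x) ((U ^ n) Ψ) : ℂ)‖ ^ 2) :
    (∀ (n : ℕ) (x : ℤ),
      ((pn1 s n).coeff x).im = 0 ∧ ((pn2 s t n).coeff x).im = 0 ∧ ((qn1 s t n).coeff x).im = 0 ∧ ((qn2 s n).coeff x).im = 0) ∧
    (∀ (n : ℕ) (x : ℤ),
      ((q n x : ℝ) : ℂ) =
        ((‖ψ₁‖ ^ 2 : ℝ) : ℂ) * (((pn1 s n).coeff x) ^ 2 + ((pn2 s t n).coeff x) ^ 2) +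
          ((‖ψ₂‖ ^ 2 : ℝ) : ℂ) * (((qn1 s t n).coeff x) ^ 2 + ((qn2 s n).coeff x) ^ 2) +
          ((2 * (ψ₁ * (starRingEnd ℂ) ψ₂).re : ℝ) : ℂ) *
            ((pn1 s n).coeff x * (qn1 s t n).coeff x + (pn2 s t n).coeff x * (qn2 s n).coeff x)) := by
  classical
  refine ⟨fun n x => (QWaux.coeff_props hst n x).1, ?_⟩
  -- operator algebra (mul = comp)
  have hVV : adjoint V * V = 1 := hVu.1
  have hVV' : V * adjoint V = 1 := hVu.2
  have hWWm : W * W = -1 := hQW1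
  have hσσ : σ * σ = 1 := by have h := hσu.1; rwa [hQW4] at h
  have hVW : V * W = W * adjoint V := hQW2
  have hσVc : σ * V = V * σ := sub_eq_zero.mp hQW3V
  have hWV : W * V = adjoint V * W := by
    have h0 : V * W * V = W := by rw [hVW, mul_assoc, hVV, mul_one]
    calc W * V = adjoint V * V * (W * V) := by rw [hVV, one_mul]
      _ = adjoint V * (V * (W * V)) := mul_assoc _ _ _
      _ = adjoint V * (V * W * V) := by rw [mul_assoc V W V]
      _ = adjoint V * W := by rw [h0]
  have hσVadj : σ * adjoint V = adjoint V * σ := by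
    have h : adjoint (σ ∘L V) = adjoint (V ∘L σ) := congrArg adjoint (sub_eq_zero.mp hQW3V)
    rw [adjoint_comp, adjoint_comp, hQW4] at h
    exact h.symm
  -- units
  have hWnW : W * (-W) = 1 := by rw [mul_neg, hWWm, neg_neg]
  have hnWW : (-W) * W = 1 := by rw [neg_mul, hWWm, neg_neg]
  set Vu : (H →L[ℂ] H)ˣ := ⟨V, adjoint V, hVV', hVV⟩ with hVudef
  set Wu : (H →L[ℂ] H)ˣ := ⟨W, -W, hWnW, hnWW⟩ with hWudef
  set σu : (H →L[ℂ] H)ˣ := ⟨σ, σ, hσσ, hσσ⟩ with hσdef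
  set vp : ℤ → H →L[ℂ] H := fun m => ((Vu ^ m : (H →L[ℂ] H)ˣ) : H →L[ℂ] H) with hvpdef
  have hvpvp : ∀ (a b : ℤ) (u : H), vp a (vp b u) = vp (a + b) u := by
    intro a b u
    simp only [hvpdef]
    rw [← ContinuousLinearMap.mul_apply, ← Units.val_mul, ← zpow_add]
  have hvp0 : ∀ u : H, vp 0 u = u := by
    intro u; simp only [hvpdef]; rw [zpow_zero, Units.val_one, ContinuousLinearMap.one_apply]
  have hvp1 : ∀ u : H, vp 1 u = V u := by
    intro u; simp only [hvpdef]; rw [zpow_one]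
  have hvpm1 : ∀ u : H, vp (-1) u = adjoint V u := by
    intro u; simp only [hvpdef]; rw [zpow_neg, zpow_one]; rfl
  have hscWV : SemiconjBy Wu Vu Vu⁻¹ := by
    apply Units.ext
    rw [Units.val_mul, Units.val_mul]
    exact hWV
  have hWvp : ∀ (m : ℤ) (u : H), W (vp m u) = vp (-m) (W u) := by
    intro m u
    have h2 : Wu * Vu ^ m = Vu⁻¹ ^ m * Wu := hscWV.zpow_right m
    rw [inv_zpow, ← zpow_neg] at h2
    have h3 := congrArg Units.val h2
    rw [Units.val_mul, Units.val_mul] at h3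
    have h5 := DFunLike.congr_fun h3 u
    rw [ContinuousLinearMap.mul_apply, ContinuousLinearMap.mul_apply] at h5
    exact h5
  have hscσV : SemiconjBy σu Vu Vu := by
    apply Units.ext
    rw [Units.val_mul, Units.val_mul]
    exact hσVc
  have hσvp : ∀ (m : ℤ) (u : H), σ (vp m u) = vp m (σ u) := by
    intro m u
    have h2 : σu * Vu ^ m = Vu ^ m * σu := hscσV.zpow_right m
    have h3 := congrArg Units.val h2
    rw [Units.val_mul, Units.val_mul] at h3
    have h5 := DFunLike.congr_fun h3 u
    rw [ContinuousLinearMap.mul_apply, ContinuousLinearMap.mul_apply] at h5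
    exact h5
  have hVvp : ∀ (m : ℤ) (u : H), V (vp m u) = vp (1 + m) u := by
    intro m u; rw [← hvp1 (vp m u), hvpvp]
  have hVadjvp : ∀ (m : ℤ) (u : H), adjoint V (vp m u) = vp (-1 + m) u := by
    intro m u; rw [← hvpm1 (vp m u), hvpvp]
  -- pointwise basics
  have hσe : σ e = e := by
    have h := hePp
    rw [hPp, ContinuousLinearMap.smul_apply, ContinuousLinearMap.add_apply,
      ContinuousLinearMap.one_apply] at h
    have h2 : e + σ e = (2 : ℂ) • e := by
      calc e + σ e = (2 : ℂ) • ((2 : ℂ)⁻¹ • (e + σ e)) := by rw [smul_smul]; norm_num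
        _ = (2 : ℂ) • e := by rw [h]
    have h3 : σ e = (2 : ℂ) • e - e := by rw [← h2]; abel
    rw [h3, two_smul]; abel
  have hεe : ε e = V (W e) := by rw [hε]; rfl
  have hσWe : σ (W e) = -(W e) := by
    have h := DFunLike.congr_fun hQW3W e
    rw [ContinuousLinearMap.add_apply, ContinuousLinearMap.zero_apply,
      ContinuousLinearMap.comp_apply, ContinuousLinearMap.comp_apply, hσe] at h
    exact eq_neg_of_add_eq_zero_left h
  have hσVptw : ∀ u : H, σ (V u) = V (σ u) := by
    intro u
    have h := DFunLike.congr_fun hσVc u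
    rw [ContinuousLinearMap.mul_apply, ContinuousLinearMap.mul_apply] at h
    exact h
  have hσVadjptw : ∀ u : H, σ (adjoint V u) = adjoint V (σ u) := by
    intro u
    have h := DFunLike.congr_fun hσVadj u
    rw [ContinuousLinearMap.mul_apply, ContinuousLinearMap.mul_apply] at h
    exact h
  have hσf : σ (ε e) = -(ε e) := by
    rw [hεe, hσVptw, hσWe, map_neg]
  have hI2 : Complex.I * (2 * Complex.I)⁻¹ = (2 : ℂ)⁻¹ := by
    rw [mul_inv, mul_comm ((2 : ℂ)⁻¹) (Complex.I)⁻¹, ← mul_assoc,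
      mul_inv_cancel₀ Complex.I_ne_zero, one_mul]
  have hTapp : ∀ u : H,
      T u = (2 : ℂ)⁻¹ • (V u + adjoint V u) + (2 : ℂ)⁻¹ • (σ (V u) - σ (adjoint V u)) := by
    intro u
    rw [hT, hX, hY, ContinuousLinearMap.add_apply, ContinuousLinearMap.smul_apply,
      ContinuousLinearMap.smul_apply, ContinuousLinearMap.add_apply,
      ContinuousLinearMap.comp_apply, ContinuousLinearMap.smul_apply,
      ContinuousLinearMap.sub_apply, map_smul, smul_smul, hI2, map_sub]
  have hTfix : ∀ u : H, σ u = u → T u = V u := by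
    intro u hu
    rw [hTapp, hσVptw, hσVadjptw, hu]
    module
  have hTfix' : ∀ u : H, σ u = -u → T u = adjoint V u := by
    intro u hu
    rw [hTapp, hσVptw, hσVadjptw, hu, map_neg, map_neg]
    module
  have hσvpe : ∀ m : ℤ, σ (vp m e) = vp m e := fun m => by rw [hσvp m e, hσe]
  have hσvpf : ∀ m : ℤ, σ (vp m (ε e)) = -(vp m (ε e)) := fun m => by
    rw [hσvp, hσf, map_neg]
  have hTinvT : ∀ u : H, ((Tu⁻¹ : (H →L[ℂ] H)ˣ) : H →L[ℂ] H) (T u) = u := by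
    intro u
    rw [← hTu, ← ContinuousLinearMap.mul_apply, ← Units.val_mul, inv_mul_cancel,
      Units.val_one, ContinuousLinearMap.one_apply]
  have hTinj : Function.Injective T := fun a b h => by
    have h2 := congrArg (fun v => ((Tu⁻¹ : (H →L[ℂ] H)ˣ) : H →L[ℂ] H) v) h
    simp only [hTinvT] at h2
    exact h2
  have hTustep : ∀ (x : ℤ) (u : H),
      ((Tu ^ (x + 1) : (H →L[ℂ] H)ˣ) : H →L[ℂ] H) u
        = T (((Tu ^ x : (H →L[ℂ] H)ˣ) : H →L[ℂ] H) u) := by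
    intro x u
    have h : Tu ^ (x + 1) = Tu * Tu ^ x := by rw [add_comm, zpow_add, zpow_one]
    rw [h, Units.val_mul, ContinuousLinearMap.mul_apply, hTu]
  have he1v : ∀ x : ℤ, e1 x = vp x e := by
    intro x
    induction x using Int.induction_on with
    | zero => rw [he1 0, zpow_zero, Units.val_one, ContinuousLinearMap.one_apply, hvp0]
    | succ i ih =>
      rw [he1, hTustep, ← he1 i, ih, hTfix _ (hσvpe i), hVvp,
        show (1 + (i : ℤ)) = (i : ℤ) + 1 from by ring]
    | pred i ih =>
      apply hTinj
      rw [show T (e1 (-(i : ℤ) - 1)) = ((Tu ^ ((-(i : ℤ) - 1) + 1) : (H →L[ℂ] H)ˣ) :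
          H →L[ℂ] H) e from by rw [he1, hTustep],
        show (-(i : ℤ) - 1) + 1 = -(i : ℤ) from by ring, ← he1, ih,
        hTfix _ (hσvpe _), hVvp, show (1 + (-(i : ℤ) - 1)) = -(i : ℤ) from by ring]
  have he2v : ∀ x : ℤ, e2 x = vp (-x) (ε e) := by
    intro x
    induction x using Int.induction_on with
    | zero => rw [he2 0, zpow_zero, Units.val_one, ContinuousLinearMap.one_apply, neg_zero, hvp0]
    | succ i ih =>
      rw [he2, hTustep, ← he2 i, ih, hTfix' _ (hσvpf _), hVadjvp,
        show (-1 + -(i : ℤ)) = -((i : ℤ) + 1) from by ring]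
    | pred i ih =>
      apply hTinj
      rw [show T (e2 (-(i : ℤ) - 1)) = ((Tu ^ ((-(i : ℤ) - 1) + 1) : (H →L[ℂ] H)ˣ) :
          H →L[ℂ] H) (ε e) from by rw [he2, hTustep],
        show (-(i : ℤ) - 1) + 1 = -(i : ℤ) from by ring, ← he2, ih,
        hTfix' _ (hσvpf _), hVadjvp, show (-1 + -(-(i : ℤ) - 1)) = - -(i : ℤ) from by ring]
  -- action of U on the basis
  have hUapp : ∀ u : H, U u = (s : ℂ) • V u + (t : ℂ) • W u := by
    intro u
    rw [hU, ContinuousLinearMap.add_apply, ContinuousLinearMap.smul_apply,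
      ContinuousLinearMap.smul_apply]
  have hUe1 : ∀ x : ℤ, U (e1 x) = (s : ℂ) • e1 (x + 1) + (t : ℂ) • e2 (x + 1) := by
    intro x
    rw [he1v, hUapp, he1v, he2v]
    congr 1
    · rw [hVvp, show (1 + x) = x + 1 from by ring]
    · rw [hWvp, hεe, show V (W e) = vp 1 (W e) from (hvp1 _).symm, hvpvp,
        show (-(x+1) + 1) = -x from by ring]
  have hWWe : W (W e) = -e := by
    have h := DFunLike.congr_fun hQW1 e
    rw [ContinuousLinearMap.comp_apply] at h
    simpa using h
  have hWVptw : ∀ u : H, W (V u) = adjoint V (W u) := by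
    intro u
    have h := DFunLike.congr_fun hWV u
    rw [ContinuousLinearMap.mul_apply, ContinuousLinearMap.mul_apply] at h
    exact h
  have hWf : W (ε e) = -(vp (-1) e) := by
    rw [hεe, hWVptw, hWWe, map_neg, hvpm1]
  have hUe2 : ∀ x : ℤ, U (e2 x) = (s : ℂ) • e2 (x - 1) - (t : ℂ) • e1 (x - 1) := by
    intro x
    rw [he2v, hUapp, he2v, he1v, sub_eq_add_neg]
    congr 1
    · rw [hVvp, show (1 + -x) = -(x - 1) from by ring]
    · rw [hWvp, hWf, map_neg, hvpvp, show (- -x + -1) = x - 1 from by ring, smul_neg]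
  -- inner ℂ products
  have innV : ∀ u v : H, (inner ℂ (V u) (V v) : ℂ) = inner ℂ u v := by
    intro u v
    rw [← ContinuousLinearMap.adjoint_inner_right]
    congr 1
    have h := DFunLike.congr_fun hVu.1 v
    rw [ContinuousLinearMap.comp_apply] at h
    simpa using h
  have innVadj : ∀ u v : H, (inner ℂ (adjoint V u) (adjoint V v) : ℂ) = inner ℂ u v := by
    intro u v
    rw [ContinuousLinearMap.adjoint_inner_left]
    congr 1
    have h := DFunLike.congr_fun hVu.2 v
    rw [ContinuousLinearMap.comp_apply] at h
    simpa using h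
  have innW : ∀ u v : H, (inner ℂ (W u) (W v) : ℂ) = inner ℂ u v := by
    intro u v
    rw [← ContinuousLinearMap.adjoint_inner_right]
    congr 1
    have h := DFunLike.congr_fun hWu.1 v
    rw [ContinuousLinearMap.comp_apply] at h
    simpa using h
  have innvp : ∀ (m : ℤ) (u v : H), (inner ℂ (vp m u) (vp m v) : ℂ) = inner ℂ u v := by
    intro m
    induction m using Int.induction_on with
    | zero => intro u v; rw [hvp0, hvp0]
    | succ i ih =>
      intro u v
      rw [show ((i : ℤ) + 1) = 1 + (i : ℤ) from by ring, ← hvpvp, ← hvpvp, hvp1, hvp1,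
        innV, ih]
    | pred i ih =>
      intro u v
      rw [show (-(i : ℤ) - 1) = -1 + -(i : ℤ) from by ring, ← hvpvp, ← hvpvp, hvpm1, hvpm1,
        innVadj, ih]
  have inner_e : (inner ℂ e e : ℂ) = 1 := by
    rw [inner_self_eq_norm_sq_to_K, he]; norm_num
  have hvpnat : ∀ k : ℕ, vp (k : ℤ) e = (V ^ k) e := by
    intro k
    simp only [hvpdef]
    rw [zpow_natCast, Units.val_pow_eq_pow_val]
  have horthZ : ∀ m : ℤ, m ≠ 0 → (inner ℂ e (vp m e) : ℂ) = 0 := by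
    intro m hm
    rcases lt_or_gt_of_ne hm with hneg | hpos
    · have h1 : (inner ℂ (vp (-m) e) (vp (-m) (vp m e)) : ℂ) = inner ℂ e (vp m e) := innvp _ _ _
      rw [hvpvp, show (-m + m) = (0 : ℤ) from by ring, hvp0] at h1
      rw [← h1, show (-m) = (((-m).toNat : ℕ) : ℤ) from by omega, hvpnat]
      exact horth _ (by omega)
    · rw [show m = ((m.toNat : ℕ) : ℤ) from by omega, hvpnat, ← inner_conj_symm,
        horth _ (by omega), map_zero]
  have ip11 : ∀ x y : ℤ, (inner ℂ (e1 x) (e1 y) : ℂ) = if x = y then 1 else 0 := by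
    intro x y
    rw [he1v, he1v,
      show vp y e = vp x (vp (y - x) e) from by rw [hvpvp, add_sub_cancel], innvp]
    by_cases hxy : x = y
    · subst hxy; rw [if_pos rfl, sub_self, hvp0, inner_e]
    · rw [if_neg hxy, horthZ _ (by omega)]
  have innf : ∀ m : ℤ, (inner ℂ (ε e) (vp m (ε e)) : ℂ) = inner ℂ e (vp (-m) e) := by
    intro m
    rw [hεe, show vp m (V (W e)) = V (vp m (W e)) from by
        rw [show V (W e) = vp 1 (W e) from (hvp1 _).symm, hvpvp, hVvp,
          show (m + 1) = 1 + m from by ring],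
      innV, show vp m (W e) = W (vp (-m) e) from by rw [hWvp, neg_neg], innW]
  have ip22 : ∀ x y : ℤ, (inner ℂ (e2 x) (e2 y) : ℂ) = if x = y then 1 else 0 := by
    intro x y
    rw [he2v, he2v,
      show vp (-y) (ε e) = vp (-x) (vp (x - y) (ε e)) from by
        rw [hvpvp, show (-x + (x - y)) = -y from by ring],
      innvp, innf]
    by_cases hxy : x = y
    · subst hxy; rw [if_pos rfl, sub_self, neg_zero, hvp0, inner_e]
    · rw [if_neg hxy, horthZ _ (by omega)]
  have hσs : ∀ u v : H, (inner ℂ (σ u) v : ℂ) = inner ℂ u (σ v) := by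
    intro u v
    calc (inner ℂ (σ u) v : ℂ) = inner ℂ (adjoint σ u) v := by rw [hQW4]
      _ = inner ℂ u (σ v) := ContinuousLinearMap.adjoint_inner_left σ v u
  have ip12 : ∀ x y : ℤ, (inner ℂ (e1 x) (e2 y) : ℂ) = 0 := by
    intro x y
    have h1 : σ (e1 x) = e1 x := by rw [he1v]; exact hσvpe x
    have h2 : σ (e2 y) = -(e2 y) := by rw [he2v]; exact hσvpf _
    have hc : (inner ℂ (e1 x) (e2 y) : ℂ) = -(inner ℂ (e1 x) (e2 y) : ℂ) := by
      conv_lhs => rw [← h1]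
      rw [hσs, h2, inner_neg_right]
    linear_combination hc / 2
  have ip21 : ∀ x y : ℤ, (inner ℂ (e2 x) (e1 y) : ℂ) = 0 := by
    intro x y
    rw [← inner_conj_symm, ip12, map_zero]
  -- the coefficient functions
  set Ac : ℕ → ℤ → ℂ := fun n x => ψ₁ * (pn1 s n).coeff x + ψ₂ * (qn1 s t n).coeff x with hAc
  set Bc : ℕ → ℤ → ℂ := fun n x => ψ₁ * (pn2 s t n).coeff x + ψ₂ * (qn2 s n).coeff x with hBc
  have hAsupp : ∀ (n : ℕ) (x : ℤ), (n : ℤ) < |x| → Ac n x = 0 := by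
    intro n x hx
    have h := (QWaux.coeff_props hst n x).2 hx
    simp only [hAc, h.1, h.2.2.1, mul_zero, add_zero]
  have hBsupp : ∀ (n : ℕ) (x : ℤ), (n : ℤ) < |x| → Bc n x = 0 := by
    intro n x hx
    have h := (QWaux.coeff_props hst n x).2 hx
    simp only [hBc, h.2.1, h.2.2.2, mul_zero, add_zero]
  have hArec : ∀ (n : ℕ) (x : ℤ),
      Ac (n+1) x = (s : ℂ) * Ac n (x-1) - (t : ℂ) * Bc n (x+1) := by
    intro n x
    simp only [hAc, hBc]
    rw [QWaux.pn1_rec hst, QWaux.qn1_rec]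
    ring
  have hBrec : ∀ (n : ℕ) (x : ℤ),
      Bc (n+1) x = (t : ℂ) * Ac n (x-1) + (s : ℂ) * Bc n (x+1) := by
    intro n x
    simp only [hAc, hBc]
    rw [QWaux.pn2_rec, QWaux.qn2_rec hst]
    ring
  have hA00 : Ac 0 0 = ψ₁ := by
    simp only [hAc]
    rw [QWaux.pn1_zero, QWaux.qn1_zero, QWaux.one_apply]
    simp
  have hB00 : Bc 0 0 = ψ₂ := by
    simp only [hBc]
    rw [QWaux.pn2_zero, QWaux.qn2_zero, QWaux.one_apply]
    simp
  set Φ : ℕ → ℕ → H := fun n N =>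
    ∑ x ∈ Finset.Icc (-(N : ℤ)) (N : ℤ), (Ac n x • e1 x + Bc n x • e2 x) with hΦ
  have hterm0 : ∀ (n : ℕ) (x : ℤ), (n : ℤ) < |x| → Ac n x • e1 x + Bc n x • e2 x = 0 := by
    intro n x hx
    rw [hAsupp n x hx, hBsupp n x hx, zero_smul, zero_smul, add_zero]
  have hΦext : ∀ (n N M : ℕ), n ≤ N → N ≤ M → Φ n N = Φ n M := by
    intro n N M h1 h2
    simp only [hΦ]
    apply QWaux.sum_extend _ _ _ _ _ (by omega) (by omega)
    intro x hx
    exact hterm0 n x (by rw [lt_abs]; omega)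
  have hmain : ∀ n : ℕ, (U ^ n) Ψ = Φ n n := by
    intro n
    induction n with
    | zero =>
      rw [pow_zero, ContinuousLinearMap.one_apply, hΨ]
      simp only [hΦ]
      rw [Nat.cast_zero, neg_zero, Finset.Icc_self, Finset.sum_singleton, hA00, hB00]
    | succ n ih =>
      have hstep : (U ^ (n+1)) Ψ = U ((U ^ n) Ψ) := by
        rw [pow_succ', ContinuousLinearMap.mul_apply]
      rw [hstep, ih, hΦext n n (n+1) (le_refl n) (by omega)]
      simp only [hΦ]
      rw [map_sum]
      have hterm : ∀ x ∈ Finset.Icc (-((n:ℕ)+1 : ℤ)) ((n:ℕ)+1 : ℤ),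
          U (Ac n x • e1 x + Bc n x • e2 x)
            = (((s:ℂ) * Ac n x) • e1 (x+1) + ((t:ℂ) * Ac n x) • e2 (x+1))
              + (((s:ℂ) * Bc n x) • e2 (x-1) + (-(t:ℂ) * Bc n x) • e1 (x-1)) := by
        intro x _
        rw [map_add, map_smul, map_smul, hUe1, hUe2]
        module
      rw [show (-(((n:ℕ)+1 : ℕ) : ℤ)) = (-((n:ℕ)+1 : ℤ)) from by push_cast; ring,
        show ((((n:ℕ)+1 : ℕ)) : ℤ) = (((n:ℕ)+1 : ℤ)) from by push_cast; ring]
      rw [Finset.sum_congr rfl hterm, Finset.sum_add_distrib, Finset.sum_add_distrib,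
        Finset.sum_add_distrib]
      have sh1 : ∑ x ∈ Finset.Icc (-((n:ℕ)+1 : ℤ)) ((n:ℕ)+1 : ℤ), ((s:ℂ) * Ac n x) • e1 (x+1)
          = ∑ y ∈ Finset.Icc (-((n:ℕ)+2 : ℤ)) ((n:ℕ)+2 : ℤ), ((s:ℂ) * Ac n (y-1)) • e1 y := by
        have h := QWaux.sum_shift (fun y => ((s:ℂ) * Ac n (y-1)) • e1 y) 1
          (-((n:ℕ)+1 : ℤ)) ((n:ℕ)+1 : ℤ)
        simp only [add_sub_cancel_right] at h
        rw [h]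
        apply QWaux.sum_extend _ _ _ _ _ (by omega) (by omega)
        intro y hy
        rw [hAsupp n (y-1) (by rw [lt_abs]; omega), mul_zero, zero_smul]
      have sh2 : ∑ x ∈ Finset.Icc (-((n:ℕ)+1 : ℤ)) ((n:ℕ)+1 : ℤ), ((t:ℂ) * Ac n x) • e2 (x+1)
          = ∑ y ∈ Finset.Icc (-((n:ℕ)+2 : ℤ)) ((n:ℕ)+2 : ℤ), ((t:ℂ) * Ac n (y-1)) • e2 y := by
        have h := QWaux.sum_shift (fun y => ((t:ℂ) * Ac n (y-1)) • e2 y) 1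
          (-((n:ℕ)+1 : ℤ)) ((n:ℕ)+1 : ℤ)
        simp only [add_sub_cancel_right] at h
        rw [h]
        apply QWaux.sum_extend _ _ _ _ _ (by omega) (by omega)
        intro y hy
        rw [hAsupp n (y-1) (by rw [lt_abs]; omega), mul_zero, zero_smul]
      have sh3 : ∑ x ∈ Finset.Icc (-((n:ℕ)+1 : ℤ)) ((n:ℕ)+1 : ℤ), ((s:ℂ) * Bc n x) • e2 (x-1)
          = ∑ y ∈ Finset.Icc (-((n:ℕ)+2 : ℤ)) ((n:ℕ)+2 : ℤ), ((s:ℂ) * Bc n (y+1)) • e2 y := by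
        have h := QWaux.sum_shift (fun y => ((s:ℂ) * Bc n (y+1)) • e2 y) (-1)
          (-((n:ℕ)+1 : ℤ)) ((n:ℕ)+1 : ℤ)
        simp only [← sub_eq_add_neg] at h
        simp only [show ∀ z : ℤ, z - 1 + 1 = z from fun z => by ring] at h
        rw [h]
        apply QWaux.sum_extend _ _ _ _ _ (by omega) (by omega)
        intro y hy
        rw [hBsupp n (y+1) (by rw [lt_abs]; omega), mul_zero, zero_smul]
      have sh4 : ∑ x ∈ Finset.Icc (-((n:ℕ)+1 : ℤ)) ((n:ℕ)+1 : ℤ), (-(t:ℂ) * Bc n x) • e1 (x-1)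
          = ∑ y ∈ Finset.Icc (-((n:ℕ)+2 : ℤ)) ((n:ℕ)+2 : ℤ), (-(t:ℂ) * Bc n (y+1)) • e1 y := by
        have h := QWaux.sum_shift (fun y => (-(t:ℂ) * Bc n (y+1)) • e1 y) (-1)
          (-((n:ℕ)+1 : ℤ)) ((n:ℕ)+1 : ℤ)
        simp only [← sub_eq_add_neg] at h
        simp only [show ∀ z : ℤ, z - 1 + 1 = z from fun z => by ring] at h
        rw [h]
        apply QWaux.sum_extend _ _ _ _ _ (by omega) (by omega)
        intro y hy
        rw [hBsupp n (y+1) (by rw [lt_abs]; omega), mul_zero, zero_smul]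
      rw [sh1, sh2, sh3, sh4]
      have hRHS : ∑ x ∈ Finset.Icc (-((n:ℕ)+1 : ℤ)) ((n:ℕ)+1 : ℤ),
            (Ac (n+1) x • e1 x + Bc (n+1) x • e2 x)
          = ∑ x ∈ Finset.Icc (-((n:ℕ)+2 : ℤ)) ((n:ℕ)+2 : ℤ),
            (Ac (n+1) x • e1 x + Bc (n+1) x • e2 x) := by
        apply QWaux.sum_extend _ _ _ _ _ (by omega) (by omega)
        intro y hy
        apply hterm0
        rw [lt_abs]; push_cast; omega
      rw [hRHS, ← Finset.sum_add_distrib, ← Finset.sum_add_distrib, ← Finset.sum_add_distrib]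
      apply Finset.sum_congr rfl
      intro y _
      rw [hArec, hBrec]
      module
  -- extraction of the amplitudes
  have hinner1 : ∀ (n : ℕ) (x : ℤ), (inner ℂ (e1 x) ((U ^ n) Ψ) : ℂ) = Ac n x := by
    intro n x
    rw [hmain n, hΦext n n (n + x.natAbs) (by omega) (by omega)]
    simp only [hΦ]
    rw [inner_sum]
    have hterm : ∀ y ∈ Finset.Icc (-((n + x.natAbs : ℕ) : ℤ)) ((n + x.natAbs : ℕ) : ℤ),
        (inner ℂ (e1 x) (Ac n y • e1 y + Bc n y • e2 y) : ℂ) = if x = y then Ac n y else 0 := by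
      intro y _
      rw [inner_add_right, inner_smul_right, inner_smul_right, ip11, ip12, mul_zero, add_zero,
        mul_ite, mul_one, mul_zero]
    rw [Finset.sum_congr rfl hterm, Finset.sum_ite_eq]
    rw [if_pos (by rw [Finset.mem_Icc]; omega)]
  have hinner2 : ∀ (n : ℕ) (x : ℤ), (inner ℂ (e2 x) ((U ^ n) Ψ) : ℂ) = Bc n x := by
    intro n x
    rw [hmain n, hΦext n n (n + x.natAbs) (by omega) (by omega)]
    simp only [hΦ]
    rw [inner_sum]
    have hterm : ∀ y ∈ Finset.Icc (-((n + x.natAbs : ℕ) : ℤ)) ((n + x.natAbs : ℕ) : ℤ),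
        (inner ℂ (e2 x) (Ac n y • e1 y + Bc n y • e2 y) : ℂ) = if x = y then Bc n y else 0 := by
      intro y _
      rw [inner_add_right, inner_smul_right, inner_smul_right, ip21, ip22, mul_zero, zero_add,
        mul_ite, mul_one, mul_zero]
    rw [Finset.sum_congr rfl hterm, Finset.sum_ite_eq]
    rw [if_pos (by rw [Finset.mem_Icc]; omega)]
  -- final computation
  intro n x
  have hre := (QWaux.coeff_props hst n x).1
  have hc1 : (pn1 s n).coeff x = ((((pn1 s n).coeff x).re : ℝ) : ℂ) := by
    rw [← Complex.re_add_im ((pn1 s n).coeff x), hre.1]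
    simp
  have hc2 : (pn2 s t n).coeff x = ((((pn2 s t n).coeff x).re : ℝ) : ℂ) := by
    rw [← Complex.re_add_im ((pn2 s t n).coeff x), hre.2.1]
    simp
  have hc3 : (qn1 s t n).coeff x = ((((qn1 s t n).coeff x).re : ℝ) : ℂ) := by
    rw [← Complex.re_add_im ((qn1 s t n).coeff x), hre.2.2.1]
    simp
  have hc4 : (qn2 s n).coeff x = ((((qn2 s n).coeff x).re : ℝ) : ℂ) := by
    rw [← Complex.re_add_im ((qn2 s n).coeff x), hre.2.2.2]
    simp
  rw [hq n x, hinner1 n x, hinner2 n x]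
  simp only [hAc, hBc]
  rw [hc1, hc2, hc3, hc4, QWaux.norm_sq_expand, QWaux.norm_sq_expand]
  push_cast
  ring
end

section
/- Fix 0 < s < 1 and ξ ∈ ℝ, and set f(θ) = arccos(s cos θ) for θ ∈ ℝ, with derivative f'(θ) = s sin θ / √(1 − s² cos² θ). Then there exists a constant C > 0 such that for all integers n ≥ 1 and all θ ∈ ℝ: |Tₙ(s cos(θ + ξ/n)) − [Tₙ(s cos θ) cos(ξ f'(θ)) − sin(n f(θ)) sin(ξ f'(θ))]| ≤ C/n and |U_{n−1}(s cos(θ + ξ/n)) − [U_{n−1}(s cos θ) cos(ξ f'(θ)) + Tₙ(s cos θ) sin(ξ f'(θ))/sin f(θ)]| ≤ C/n. -/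
/-- `f(θ) = arccos(s cos θ)`. -/
noncomputable def qwPhase (s θ : ℝ) : ℝ := Real.arccos (s * Real.cos θ)

/-- The derivative `f'(θ) = s sin θ / √(1 − s² cos² θ)` of `f`. -/
noncomputable def qwPhaseDeriv (s θ : ℝ) : ℝ :=
  s * Real.sin θ / Real.sqrt (1 - s ^ 2 * Real.cos θ ^ 2)

noncomputable def qwG (s θ : ℝ) : ℝ :=
  (s * Real.cos θ * Real.sqrt (1 - s ^ 2 * Real.cos θ ^ 2)
    - s * Real.sin θ * (s ^ 2 * Real.cos θ * Real.sin θ / Real.sqrt (1 - s ^ 2 * Real.cos θ ^ 2)))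
    / (1 - s ^ 2 * Real.cos θ ^ 2)

section qwHelpers
variable {s : ℝ}

lemma qw_d_lb (hs0 : 0 < s) (hs1 : s < 1) (θ : ℝ) :
    1 - s ^ 2 ≤ 1 - s ^ 2 * Real.cos θ ^ 2 := by
  nlinarith [Real.cos_sq_le_one θ, sq_nonneg s]
lemma qw_d_ub (θ : ℝ) : 1 - s ^ 2 * Real.cos θ ^ 2 ≤ 1 := by
  nlinarith [sq_nonneg (s * Real.cos θ), mul_pow s (Real.cos θ) 2]
lemma qw_c_pos (hs0 : 0 < s) (hs1 : s < 1) : (0:ℝ) < 1 - s ^ 2 := by nlinarith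

lemma qw_abs_lt (hs0 : 0 < s) (hs1 : s < 1) (θ : ℝ) : |s * Real.cos θ| < 1 := by
  calc |s * Real.cos θ| = s * |Real.cos θ| := by rw [abs_mul, abs_of_pos hs0]
    _ ≤ s * 1 := by gcongr; exact Real.abs_cos_le_one θ
    _ < 1 := by linarith

lemma hasDerivAt_qwPhase (hs0 : 0 < s) (hs1 : s < 1) (θ : ℝ) :
    HasDerivAt (qwPhase s) (qwPhaseDeriv s θ) θ := by
  have hx := qw_abs_lt hs0 hs1 θ
  have h1 : s * Real.cos θ ≠ -1 := by
    intro h; rw [h] at hx; norm_num at hx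
  have h2 : s * Real.cos θ ≠ 1 := by
    intro h; rw [h] at hx; norm_num at hx
  have hinner : HasDerivAt (fun θ => s * Real.cos θ) (s * (-Real.sin θ)) θ :=
    (Real.hasDerivAt_cos θ).const_mul s
  have H := (Real.hasDerivAt_arccos h1 h2).comp θ hinner
  refine H.congr_deriv ?_
  rw [show (s * Real.cos θ) ^ 2 = s ^ 2 * Real.cos θ ^ 2 by ring]
  unfold qwPhaseDeriv
  ring

lemma hasDerivAt_qwPhaseDeriv (hs0 : 0 < s) (hs1 : s < 1) (θ : ℝ) :
    HasDerivAt (qwPhaseDeriv s) (qwG s θ) θ := by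
  have hc := qw_c_pos hs0 hs1
  have hdpos : 0 < 1 - s ^ 2 * Real.cos θ ^ 2 := lt_of_lt_of_le hc (qw_d_lb hs0 hs1 θ)
  have hdne : (1 - s ^ 2 * Real.cos θ ^ 2) ≠ 0 := ne_of_gt hdpos
  have hu : HasDerivAt (fun θ => s * Real.sin θ) (s * Real.cos θ) θ :=
    (Real.hasDerivAt_sin θ).const_mul s
  have hd : HasDerivAt (fun θ => 1 - s ^ 2 * Real.cos θ ^ 2)
      (2 * s ^ 2 * Real.cos θ * Real.sin θ) θ := by
    have hcos2 : HasDerivAt (fun θ => Real.cos θ ^ 2)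
        ((2 : ℕ) * Real.cos θ ^ 1 * (-Real.sin θ)) θ := (Real.hasDerivAt_cos θ).pow 2
    have := (hcos2.const_mul (s ^ 2)).const_sub 1
    refine this.congr_deriv ?_
    push_cast; ring
  have hv : HasDerivAt (fun θ => Real.sqrt (1 - s ^ 2 * Real.cos θ ^ 2))
      (1 / (2 * Real.sqrt (1 - s ^ 2 * Real.cos θ ^ 2)) *
        (2 * s ^ 2 * Real.cos θ * Real.sin θ)) θ :=
    (Real.hasDerivAt_sqrt hdne).comp θ hd
  have hvpos : 0 < Real.sqrt (1 - s ^ 2 * Real.cos θ ^ 2) := Real.sqrt_pos.2 hdpos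
  have hvne : Real.sqrt (1 - s ^ 2 * Real.cos θ ^ 2) ≠ 0 := ne_of_gt hvpos
  have H := hu.div hv hvne
  refine H.congr_deriv ?_
  unfold qwG
  rw [Real.sq_sqrt (le_of_lt hdpos)]
  field_simp

lemma qwPhaseDeriv_bound (hs0 : 0 < s) (hs1 : s < 1) (θ : ℝ) :
    |qwPhaseDeriv s θ| ≤ 1 / Real.sqrt (1 - s ^ 2) := by
  have hc := qw_c_pos hs0 hs1
  have hcs : 0 < Real.sqrt (1 - s ^ 2) := Real.sqrt_pos.2 hc
  have hsq : Real.sqrt (1 - s ^ 2) ≤ Real.sqrt (1 - s ^ 2 * Real.cos θ ^ 2) :=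
    Real.sqrt_le_sqrt (qw_d_lb hs0 hs1 θ)
  have hnum : |s * Real.sin θ| ≤ 1 := by
    rw [abs_mul, abs_of_pos hs0]
    nlinarith [Real.abs_sin_le_one θ, abs_nonneg (Real.sin θ)]
  unfold qwPhaseDeriv
  rw [abs_div, abs_of_nonneg (Real.sqrt_nonneg _)]
  exact div_le_div₀ zero_le_one hnum hcs hsq

lemma qwG_bound (hs0 : 0 < s) (hs1 : s < 1) (θ : ℝ) :
    |qwG s θ| ≤ (1 + 1 / Real.sqrt (1 - s ^ 2)) / (1 - s ^ 2) := by
  have hc := qw_c_pos hs0 hs1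
  have hcs : 0 < Real.sqrt (1 - s ^ 2) := Real.sqrt_pos.2 hc
  have hdlb := qw_d_lb hs0 hs1 θ
  have hdpos : 0 < 1 - s ^ 2 * Real.cos θ ^ 2 := lt_of_lt_of_le hc hdlb
  have hsq : Real.sqrt (1 - s ^ 2) ≤ Real.sqrt (1 - s ^ 2 * Real.cos θ ^ 2) :=
    Real.sqrt_le_sqrt hdlb
  have hsqpos : 0 < Real.sqrt (1 - s ^ 2 * Real.cos θ ^ 2) := lt_of_lt_of_le hcs hsq
  have hsq1 : Real.sqrt (1 - s ^ 2 * Real.cos θ ^ 2) ≤ 1 := by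
    exact (Real.sqrt_le_sqrt (qw_d_ub θ)).trans_eq Real.sqrt_one
  have hs' : |s| ≤ 1 := by rw [abs_of_pos hs0]; linarith
  have hA : |s * Real.cos θ * Real.sqrt (1 - s ^ 2 * Real.cos θ ^ 2)| ≤ 1 := by
    rw [abs_mul, abs_mul, abs_of_nonneg (Real.sqrt_nonneg _)]
    exact mul_le_one₀ (mul_le_one₀ hs' (abs_nonneg _) (Real.abs_cos_le_one θ))
      (Real.sqrt_nonneg _) hsq1
  have hB : |s * Real.sin θ *
      (s ^ 2 * Real.cos θ * Real.sin θ / Real.sqrt (1 - s ^ 2 * Real.cos θ ^ 2))| ≤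
      1 / Real.sqrt (1 - s ^ 2) := by
    have h1 : |s * Real.sin θ| ≤ 1 := by
      rw [abs_mul, abs_of_pos hs0]
      nlinarith [Real.abs_sin_le_one θ, abs_nonneg (Real.sin θ)]
    have h2 : |s ^ 2 * Real.cos θ * Real.sin θ| ≤ 1 := by
      rw [abs_mul, abs_mul, abs_pow, abs_of_pos hs0]
      have hss : s ^ 2 ≤ 1 := by nlinarith
      exact mul_le_one₀ (mul_le_one₀ hss (abs_nonneg _) (Real.abs_cos_le_one θ))
        (abs_nonneg _) (Real.abs_sin_le_one θ)
    have h3 : |s ^ 2 * Real.cos θ * Real.sin θ / Real.sqrt (1 - s ^ 2 * Real.cos θ ^ 2)| ≤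
        1 / Real.sqrt (1 - s ^ 2) := by
      rw [abs_div, abs_of_nonneg (Real.sqrt_nonneg _)]
      exact div_le_div₀ zero_le_one h2 hcs hsq
    calc |s * Real.sin θ * _| = |s * Real.sin θ| * |_| := abs_mul _ _
      _ ≤ 1 * (1 / Real.sqrt (1 - s ^ 2)) := by
          apply mul_le_mul h1 h3 (abs_nonneg _) zero_le_one
      _ = 1 / Real.sqrt (1 - s ^ 2) := one_mul _
  unfold qwG
  rw [abs_div, abs_of_pos hdpos]
  apply div_le_div₀ (by positivity) _ hc hdlb
  calc |_ - _| ≤ |_| + |_| := abs_sub _ _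
    _ ≤ 1 + 1 / Real.sqrt (1 - s ^ 2) := add_le_add hA hB
lemma qw_abs_sin_sub_sin (x y : ℝ) : |Real.sin x - Real.sin y| ≤ |x - y| := by
  have := Convex.norm_image_sub_le_of_norm_hasDerivWithin_le
    (f := Real.sin) (f' := Real.cos) (C := 1)
    (fun t _ => (Real.hasDerivAt_sin t).hasDerivWithinAt)
    (fun t _ => by simpa using Real.abs_cos_le_one t) convex_univ
    (Set.mem_univ y) (Set.mem_univ x)
  simpa [Real.norm_eq_abs] using this

lemma qw_abs_cos_sub_cos (x y : ℝ) : |Real.cos x - Real.cos y| ≤ |x - y| := by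
  have := Convex.norm_image_sub_le_of_norm_hasDerivWithin_le
    (f := Real.cos) (f' := fun t => -Real.sin t) (C := 1)
    (fun t _ => (Real.hasDerivAt_cos t).hasDerivWithinAt)
    (fun t _ => by simpa using Real.abs_sin_le_one t) convex_univ
    (Set.mem_univ y) (Set.mem_univ x)
  simpa [Real.norm_eq_abs] using this

lemma qw_mem_uIcc_abs {θ h t : ℝ} (ht : t ∈ Set.uIcc θ (θ + h)) : |t - θ| ≤ |h| := by
  rcases Set.mem_uIcc.mp ht with ⟨h1, h2⟩ | ⟨h1, h2⟩ <;>
    exact abs_le.2 ⟨by linarith [neg_abs_le h, le_abs_self h],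
      by linarith [neg_abs_le h, le_abs_self h]⟩

lemma qwPhase_lip (hs0 : 0 < s) (hs1 : s < 1) (x y : ℝ) :
    |qwPhase s x - qwPhase s y| ≤ (1 / Real.sqrt (1 - s ^ 2)) * |x - y| := by
  have := Convex.norm_image_sub_le_of_norm_hasDerivWithin_le
    (f := qwPhase s) (f' := qwPhaseDeriv s) (C := 1 / Real.sqrt (1 - s ^ 2))
    (s := Set.univ)
    (fun t _ => (hasDerivAt_qwPhase hs0 hs1 t).hasDerivWithinAt)
    (fun t _ => by simpa [Real.norm_eq_abs] using qwPhaseDeriv_bound hs0 hs1 t) convex_univ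
    (Set.mem_univ y) (Set.mem_univ x)
  simpa [Real.norm_eq_abs] using this

lemma qwPhase_taylor (hs0 : 0 < s) (hs1 : s < 1) (θ h : ℝ) :
    |qwPhase s (θ + h) - qwPhase s θ - h * qwPhaseDeriv s θ| ≤
      ((1 + 1 / Real.sqrt (1 - s ^ 2)) / (1 - s ^ 2)) * h ^ 2 := by
  set M := (1 + 1 / Real.sqrt (1 - s ^ 2)) / (1 - s ^ 2) with hMdef
  have hM0 : 0 ≤ M := le_trans (abs_nonneg _) (qwG_bound hs0 hs1 0)
  set K := Set.uIcc θ (θ + h) with hK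
  have hθK : θ ∈ K := Set.left_mem_uIcc
  have hθhK : θ + h ∈ K := Set.right_mem_uIcc
  have hconv : Convex ℝ K := convex_uIcc _ _
  -- f' is M-Lipschitz on K relative to θ
  have hlip : ∀ t ∈ K, |qwPhaseDeriv s t - qwPhaseDeriv s θ| ≤ M * |h| := by
    intro t ht
    have := Convex.norm_image_sub_le_of_norm_hasDerivWithin_le
      (f := qwPhaseDeriv s) (f' := qwG s) (C := M) (s := K)
      (fun u _ => (hasDerivAt_qwPhaseDeriv hs0 hs1 u).hasDerivWithinAt)
      (fun u _ => by rw [Real.norm_eq_abs, hMdef]; exact qwG_bound hs0 hs1 u) hconv hθK ht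
    rw [Real.norm_eq_abs, Real.norm_eq_abs] at this
    calc |qwPhaseDeriv s t - qwPhaseDeriv s θ| ≤ M * |t - θ| := this
      _ ≤ M * |h| := mul_le_mul_of_nonneg_left (qw_mem_uIcc_abs ht) hM0
  have hF := Convex.norm_image_sub_le_of_norm_hasDerivWithin_le
    (f := fun t => qwPhase s t - t * qwPhaseDeriv s θ)
    (f' := fun t => qwPhaseDeriv s t - qwPhaseDeriv s θ) (C := M * |h|) (s := K)
    (fun u _ => ((hasDerivAt_qwPhase hs0 hs1 u).sub
      (hasDerivAt_mul_const (qwPhaseDeriv s θ))).hasDerivWithinAt)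
    (fun u hu => by simpa [Real.norm_eq_abs] using hlip u hu) hconv hθK hθhK
  rw [Real.norm_eq_abs, Real.norm_eq_abs] at hF
  have heq : qwPhase s (θ + h) - (θ + h) * qwPhaseDeriv s θ -
      (qwPhase s θ - θ * qwPhaseDeriv s θ) =
      qwPhase s (θ + h) - qwPhase s θ - h * qwPhaseDeriv s θ := by ring
  rw [heq] at hF
  calc |qwPhase s (θ + h) - qwPhase s θ - h * qwPhaseDeriv s θ|
      ≤ M * |h| * |θ + h - θ| := hF
    _ = M * h ^ 2 := by
        rw [show θ + h - θ = h by ring, mul_assoc, ← abs_mul,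
          abs_of_nonneg (mul_self_nonneg h)]; ring
lemma qw_cos_phase (hs0 : 0 < s) (hs1 : s < 1) (θ : ℝ) :
    Real.cos (qwPhase s θ) = s * Real.cos θ := by
  have h := abs_le.1 (le_of_lt (qw_abs_lt hs0 hs1 θ))
  exact Real.cos_arccos h.1 h.2

lemma qw_sin_phase_lb (hs0 : 0 < s) (hs1 : s < 1) (θ : ℝ) :
    Real.sqrt (1 - s ^ 2) ≤ Real.sin (qwPhase s θ) := by
  rw [qwPhase, Real.sin_arccos]
  rw [show 1 - (s * Real.cos θ) ^ 2 = 1 - s ^ 2 * Real.cos θ ^ 2 by ring]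
  exact Real.sqrt_le_sqrt (qw_d_lb hs0 hs1 θ)

/-- Uniform Taylor-expansion asymptotics for `Tₙ(s cos(θ + ξ/n))` and
`U_{n−1}(s cos(θ + ξ/n))` with error `O(1/n)` uniform in `θ`. -/
theorem chebyshev_taylor_asymptotics (s : ℝ) (hs0 : 0 < s) (hs1 : s < 1) (ξ : ℝ) :
    ∃ C > 0, ∀ n : ℕ, 1 ≤ n → ∀ θ : ℝ,
      |(Polynomial.Chebyshev.T ℝ (n : ℤ)).eval (s * Real.cos (θ + ξ / n)) -
          ((Polynomial.Chebyshev.T ℝ (n : ℤ)).eval (s * Real.cos θ) *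
              Real.cos (ξ * qwPhaseDeriv s θ) -
            Real.sin (n * qwPhase s θ) * Real.sin (ξ * qwPhaseDeriv s θ))| ≤ C / n ∧
      |(Polynomial.Chebyshev.U ℝ ((n : ℤ) - 1)).eval (s * Real.cos (θ + ξ / n)) -
          ((Polynomial.Chebyshev.U ℝ ((n : ℤ) - 1)).eval (s * Real.cos θ) *
              Real.cos (ξ * qwPhaseDeriv s θ) +
            (Polynomial.Chebyshev.T ℝ (n : ℤ)).eval (s * Real.cos θ) *
              (Real.sin (ξ * qwPhaseDeriv s θ) / Real.sin (qwPhase s θ)))| ≤ C / n := by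
  have hc := qw_c_pos hs0 hs1
  set c := Real.sqrt (1 - s ^ 2) with hcdef
  have hcpos : 0 < c := Real.sqrt_pos.2 hc
  set M := (1 + 1 / c) / (1 - s ^ 2) with hMdef
  have hM0 : 0 ≤ M := div_nonneg (by positivity) hc.le
  refine ⟨M * ξ ^ 2 + M * ξ ^ 2 / c + |ξ| / c ^ 3 + 1, by positivity, ?_⟩
  intro n hn θ
  have hn0 : (0:ℝ) < n := by exact_mod_cast Nat.pos_of_ne_zero (by omega)
  set h := ξ / n with hhdef
  have hξ : ξ = n * h := by rw [hhdef]; field_simp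
  set a := qwPhase s θ with hadef
  set a' := qwPhase s (θ + h) with ha'def
  set fd := qwPhaseDeriv s θ with hfddef
  set α := (n:ℝ) * a' with hαdef
  set β := (n:ℝ) * a + ξ * fd with hβdef
  -- sine lower bounds
  have hsa : c ≤ Real.sin a := qw_sin_phase_lb hs0 hs1 θ
  have hsa' : c ≤ Real.sin a' := qw_sin_phase_lb hs0 hs1 (θ + h)
  have hsapos : 0 < Real.sin a := lt_of_lt_of_le hcpos hsa
  have hsa'pos : 0 < Real.sin a' := lt_of_lt_of_le hcpos hsa'
  -- angle bounds
  have hαβ : |α - β| ≤ M * ξ ^ 2 / n := by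
    have ht := qwPhase_taylor hs0 hs1 θ h
    have heq : α - β = (n:ℝ) * (a' - a - h * fd) := by
      rw [hαdef, hβdef, hξ]; ring
    rw [heq, abs_mul, abs_of_pos hn0]
    calc (n:ℝ) * |a' - a - h * fd| ≤ (n:ℝ) * (M * h ^ 2) := by gcongr
      _ = M * ξ ^ 2 / n := by rw [hhdef]; field_simp
  have haa' : |a - a'| ≤ |ξ| / (c * n) := by
    calc |a - a'| ≤ (1 / c) * |θ - (θ + h)| := qwPhase_lip hs0 hs1 θ (θ + h)
      _ = |ξ| / (c * n) := by
          rw [show θ - (θ + h) = -h by ring, abs_neg, hhdef, abs_div,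
            abs_of_pos hn0]
          field_simp
  -- Chebyshev evaluations
  have eT : ∀ φ : ℝ, (Polynomial.Chebyshev.T ℝ (n : ℤ)).eval (s * Real.cos φ) =
      Real.cos ((n:ℝ) * qwPhase s φ) := by
    intro φ
    rw [← qw_cos_phase hs0 hs1 φ, Polynomial.Chebyshev.T_real_cos]
    norm_num
  have eU : ∀ φ : ℝ, Real.sin (qwPhase s φ) ≠ 0 →
      (Polynomial.Chebyshev.U ℝ ((n : ℤ) - 1)).eval (s * Real.cos φ) =
      Real.sin ((n:ℝ) * qwPhase s φ) / Real.sin (qwPhase s φ) := by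
    intro φ hne
    have hU := Polynomial.Chebyshev.U_real_cos (qwPhase s φ) ((n : ℤ) - 1)
    rw [qw_cos_phase hs0 hs1 φ] at hU
    rw [eq_div_iff hne, hU]
    norm_num
  constructor
  · -- T part
    rw [eT (θ + h), eT θ, ← hadef, ← ha'def, ← hαdef]
    rw [show Real.cos ((n:ℝ) * a) * Real.cos (ξ * fd) -
        Real.sin ((n:ℕ) * a) * Real.sin (ξ * fd) = Real.cos β by
      rw [hβdef, Real.cos_add]]
    calc |Real.cos α - Real.cos β| ≤ |α - β| := qw_abs_cos_sub_cos α β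
      _ ≤ M * ξ ^ 2 / n := hαβ
      _ ≤ (M * ξ ^ 2 + M * ξ ^ 2 / c + |ξ| / c ^ 3 + 1) / n := by
          apply (div_le_div_iff_of_pos_right hn0).2
          have h1 : 0 ≤ M * ξ ^ 2 / c := div_nonneg (by positivity) hcpos.le
          have h2 : 0 ≤ |ξ| / c ^ 3 := div_nonneg (abs_nonneg _) (pow_pos hcpos 3).le
          linarith
  · -- U part
    rw [eU (θ + h) (ne_of_gt hsa'pos), eU θ (ne_of_gt hsapos), eT θ,
      ← hadef, ← ha'def, ← hαdef]
    rw [show Real.sin ((n:ℝ) * a) / Real.sin a * Real.cos (ξ * fd) +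
        Real.cos ((n:ℝ) * a) * (Real.sin (ξ * fd) / Real.sin a) =
        Real.sin β / Real.sin a by
      rw [hβdef, Real.sin_add]; field_simp]
    have hkey : Real.sin α / Real.sin a' - Real.sin β / Real.sin a =
        (Real.sin α - Real.sin β) / Real.sin a' +
        Real.sin β * (Real.sin a - Real.sin a') / (Real.sin a' * Real.sin a) := by
      field_simp
      ring
    rw [hkey]
    have hb1 : |(Real.sin α - Real.sin β) / Real.sin a'| ≤ (M * ξ ^ 2 / n) / c := by
      rw [abs_div, abs_of_pos hsa'pos]
      exact div_le_div₀ (by positivity) ((qw_abs_sin_sub_sin α β).trans hαβ) hcpos hsa'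
    have hb2 : |Real.sin β * (Real.sin a - Real.sin a') / (Real.sin a' * Real.sin a)| ≤
        (|ξ| / (c * n)) / (c * c) := by
      rw [abs_div, abs_of_pos (mul_pos hsa'pos hsapos), abs_mul]
      apply div_le_div₀ (by positivity) _ (by positivity) (by nlinarith)
      calc |Real.sin β| * |Real.sin a - Real.sin a'| ≤ 1 * |a - a'| := by
            apply mul_le_mul (Real.abs_sin_le_one β) (qw_abs_sin_sub_sin a a')
              (abs_nonneg _) zero_le_one
        _ = |a - a'| := one_mul _
        _ ≤ |ξ| / (c * n) := haa'
    calc |_ + _| ≤ |(Real.sin α - Real.sin β) / Real.sin a'| +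
          |Real.sin β * (Real.sin a - Real.sin a') / (Real.sin a' * Real.sin a)| :=
        abs_add_le _ _
      _ ≤ (M * ξ ^ 2 / n) / c + (|ξ| / (c * n)) / (c * c) := add_le_add hb1 hb2
      _ = (M * ξ ^ 2 / c + |ξ| / c ^ 3) / n := by field_simp
      _ ≤ (M * ξ ^ 2 + M * ξ ^ 2 / c + |ξ| / c ^ 3 + 1) / n := by
          apply (div_le_div_iff_of_pos_right hn0).2
          have h1 : 0 ≤ M * ξ ^ 2 := by positivity
          linarith
end qwHelpers
end
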